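/- arXiv:1503.02179 — 5 statements merged into one kernel-verified Lean document; each statement's English description precedes it below -/
import Mathlib

section
/- Let n ≥ 2, R₀ > 0, and let F : B_{R₀} → ℝ be a convex continuously differentiable function on the open ball B_{R₀} ⊂ ℝ^{n-1} with F ≥ 0 and F(0) = 0. Define δ(r) = sup_{0<|x'|≤r} F(x')/|x'| and δ₁(r) = sup_{|x'|≤r} |∇F(x')| for 0 < r < R₀. Then δ₁(r) → 0 as r → 0⁺ if and only if δ(r) → 0 as r → 0⁺. -/
/-!
Statement 5: `δ₁(r) → 0` as `r → 0⁺` iff `δ(r) → 0` as `r → 0⁺`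
(part (a) of Lemma `Proposition` of the paper).
-/

noncomputable section
open Metric Set Filter Topology
open InnerProductSpace

/-- `δ(r) = sup_{0<|x'|≤r} F(x')/|x'|`. -/
def deltaFn (m : ℕ) (F : EuclideanSpace ℝ (Fin m) → ℝ) (r : ℝ) : ℝ :=
  sSup ((fun x' => F x' / ‖x'‖) '' {x' : EuclideanSpace ℝ (Fin m) | 0 < ‖x'‖ ∧ ‖x'‖ ≤ r})

/-- `δ₁(r) = sup_{|x'|≤r} |∇F(x')|`. -/
def deltaOneFn (m : ℕ) (F : EuclideanSpace ℝ (Fin m) → ℝ) (r : ℝ) : ℝ :=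
  sSup ((fun x' => ‖gradient F x'‖) '' closedBall (0 : EuclideanSpace ℝ (Fin m)) r)

lemma grad_ineq {E : Type*} [NormedAddCommGroup E] [InnerProductSpace ℝ E] [CompleteSpace E]
    {s : Set E} (hs : Convex ℝ s) {F : E → ℝ} (hFconv : ConvexOn ℝ s F)
    {x y : E} (hx : x ∈ s) (hy : y ∈ s)
    (hd : DifferentiableAt ℝ F x) :
    ⟪gradient F x, y - x⟫_ℝ ≤ F y - F x := by
  set v := y - x with hv
  set c : ℝ → E := fun t => x + t • v with hc
  have h0 : c 0 = x := by simp [hc]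
  have h1 : c 1 = y := by simp [hc, hv]
  have hderc : HasDerivAt c v 0 := by
    simpa [hc] using ((hasDerivAt_id (0:ℝ)).smul_const v).const_add x
  have hFd : HasFDerivAt F (toDual ℝ E (gradient F x)) (c 0) := by
    rw [h0]; exact hd.hasGradientAt
  have hcomp : HasDerivAt (F ∘ c) (⟪gradient F x, v⟫_ℝ) 0 := by
    have := hFd.comp_hasDerivAt (0:ℝ) hderc
    simpa [toDual_apply_apply] using this
  have hconv1 : ConvexOn ℝ (Icc (0:ℝ) 1) (F ∘ c) := by
    have haff : ConvexOn ℝ ((AffineMap.lineMap x y : ℝ →ᵃ[ℝ] E) ⁻¹' s)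
        (F ∘ (AffineMap.lineMap x y : ℝ →ᵃ[ℝ] E)) :=
      hFconv.comp_affineMap _
    have hsub : Icc (0:ℝ) 1 ⊆ (AffineMap.lineMap x y : ℝ →ᵃ[ℝ] E) ⁻¹' s := by
      intro t ht
      have : (AffineMap.lineMap x y : ℝ →ᵃ[ℝ] E) t ∈ segment ℝ x y := by
        rw [segment_eq_image_lineMap]; exact ⟨t, ht, rfl⟩
      exact hs.segment_subset hx hy this
    have heq : F ∘ c = F ∘ (AffineMap.lineMap x y : ℝ →ᵃ[ℝ] E) := by
      funext t
      have hxy : c t = (AffineMap.lineMap x y : ℝ →ᵃ[ℝ] E) t := by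
        simp only [hc, AffineMap.lineMap_apply, vsub_eq_sub, vadd_eq_add, hv]
        module
      simp [Function.comp_apply, hxy]
    rw [heq]
    exact haff.subset hsub (convex_Icc 0 1)
  have hslope := hconv1.le_slope_of_hasDerivAt (by simp : (0:ℝ) ∈ Icc (0:ℝ) 1)
      (by simp : (1:ℝ) ∈ Icc (0:ℝ) 1) one_pos hcomp
  simpa [slope, h1, h0] using hslope

lemma main_aux (m : ℕ) (hm : 0 < m) (R₀ : ℝ) (hR₀ : 0 < R₀)
    (F : EuclideanSpace ℝ (Fin m) → ℝ)
    (hFconv : ConvexOn ℝ (ball (0 : EuclideanSpace ℝ (Fin m)) R₀) F)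
    (hFdiff : ContDiffOn ℝ 1 F (ball (0 : EuclideanSpace ℝ (Fin m)) R₀))
    (hFnn : ∀ x' ∈ ball (0 : EuclideanSpace ℝ (Fin m)) R₀, 0 ≤ F x')
    (hF0 : F 0 = 0) :
    Tendsto (deltaOneFn m F) (𝓝[>] (0 : ℝ)) (𝓝 0) ↔
      Tendsto (deltaFn m F) (𝓝[>] (0 : ℝ)) (𝓝 0) := by
  have hopen : IsOpen (ball (0 : EuclideanSpace ℝ (Fin m)) R₀) := isOpen_ball
  have hdAt : ∀ x ∈ ball (0 : EuclideanSpace ℝ (Fin m)) R₀, DifferentiableAt ℝ F x := fun x hx =>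
    (hFdiff.differentiableOn one_ne_zero).differentiableAt (hopen.mem_nhds hx)
  have hnorm : ∀ x : EuclideanSpace ℝ (Fin m), ‖gradient F x‖ = ‖fderiv ℝ F x‖ := fun x =>
    (toDual ℝ (EuclideanSpace ℝ (Fin m))).symm.norm_map (fderiv ℝ F x)
  have hcont : ContinuousOn (fun x : EuclideanSpace ℝ (Fin m) => ‖gradient F x‖) (ball 0 R₀) := by
    have h1 : ContinuousOn (fderiv ℝ F) (ball (0 : EuclideanSpace ℝ (Fin m)) R₀) :=
      hFdiff.continuousOn_fderiv_of_isOpen hopen le_rfl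
    exact (h1.norm).congr fun x _ => hnorm x
  -- δ₁(r) is attained (greatest value) for 0 < r < R₀
  have hd1great : ∀ r : ℝ, 0 < r → r < R₀ →
      IsGreatest ((fun x : EuclideanSpace ℝ (Fin m) => ‖gradient F x‖) '' closedBall 0 r)
        (deltaOneFn m F r) := by
    intro r h0 hr
    have hsub : closedBall (0 : EuclideanSpace ℝ (Fin m)) r ⊆ ball 0 R₀ :=
      closedBall_subset_ball hr
    have hK : IsCompact ((fun x : EuclideanSpace ℝ (Fin m) => ‖gradient F x‖) '' closedBall 0 r) :=
      (isCompact_closedBall _ _).image_of_continuousOn (hcont.mono hsub)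
    have hne : ((fun x : EuclideanSpace ℝ (Fin m) => ‖gradient F x‖) '' closedBall 0 r).Nonempty :=
      ⟨_, mem_image_of_mem _ (mem_closedBall_self h0.le)⟩
    rw [deltaOneFn]
    exact ⟨hK.sSup_mem hne, fun a ha => le_csSup hK.bddAbove ha⟩
  -- F is controlled by δ₁
  have hFbound : ∀ r : ℝ, 0 < r → r < R₀ → ∀ x : EuclideanSpace ℝ (Fin m), ‖x‖ ≤ r →
      F x ≤ deltaOneFn m F r * ‖x‖ := by
    intro r h0 hr x hx
    have hgr := hd1great r h0 hr
    have hsub : closedBall (0 : EuclideanSpace ℝ (Fin m)) r ⊆ ball 0 R₀ :=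
      closedBall_subset_ball hr
    have bound : ∀ z ∈ closedBall (0 : EuclideanSpace ℝ (Fin m)) r,
        ‖fderiv ℝ F z‖ ≤ deltaOneFn m F r := by
      intro z hz
      rw [← hnorm z]
      exact hgr.2 (mem_image_of_mem _ hz)
    have hmv := (convex_closedBall (0 : EuclideanSpace ℝ (Fin m)) r).norm_image_sub_le_of_norm_fderiv_le
        (fun z hz => hdAt z (hsub hz)) bound
        (mem_closedBall_self h0.le)
        (show x ∈ closedBall (0 : EuclideanSpace ℝ (Fin m)) r by
          simpa [mem_closedBall, dist_zero_right] using hx)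
    rw [hF0, sub_zero, sub_zero, Real.norm_eq_abs] at hmv
    exact (le_abs_self _).trans hmv
  -- every element of the δ set is ≤ δ₁(r)
  have hdub : ∀ r : ℝ, 0 < r → r < R₀ →
      ∀ a ∈ (fun x' : EuclideanSpace ℝ (Fin m) => F x' / ‖x'‖) ''
          {x' : EuclideanSpace ℝ (Fin m) | 0 < ‖x'‖ ∧ ‖x'‖ ≤ r},
        a ≤ deltaOneFn m F r := by
    rintro r h0 hr a ⟨x, ⟨hx0, hxr⟩, rfl⟩
    rw [div_le_iff₀ hx0]
    exact hFbound r h0 hr x hxr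
  have hbdd : ∀ r : ℝ, 0 < r → r < R₀ →
      BddAbove ((fun x' : EuclideanSpace ℝ (Fin m) => F x' / ‖x'‖) ''
        {x' : EuclideanSpace ℝ (Fin m) | 0 < ‖x'‖ ∧ ‖x'‖ ≤ r}) :=
    fun r h0 hr => ⟨_, hdub r h0 hr⟩
  have i₀ : Fin m := ⟨0, hm⟩
  have hpoint : ∀ r : ℝ, 0 < r → ∃ x : EuclideanSpace ℝ (Fin m), ‖x‖ = r := by
    intro r h0
    exact ⟨EuclideanSpace.single i₀ r, by
      rw [EuclideanSpace.norm_single]; exact abs_of_pos h0⟩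
  have hdnn : ∀ r : ℝ, 0 < r → r < R₀ → 0 ≤ deltaFn m F r := by
    intro r h0 hr
    obtain ⟨x, hx⟩ := hpoint r h0
    have hmem : F x / ‖x‖ ∈ (fun x' : EuclideanSpace ℝ (Fin m) => F x' / ‖x'‖) ''
        {x' : EuclideanSpace ℝ (Fin m) | 0 < ‖x'‖ ∧ ‖x'‖ ≤ r} :=
      ⟨x, ⟨by rw [hx]; exact h0, le_of_eq hx⟩, rfl⟩
    have hxball : x ∈ ball (0 : EuclideanSpace ℝ (Fin m)) R₀ := by
      rw [mem_ball, dist_zero_right, hx]; exact hr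
    have h1 : (0:ℝ) ≤ F x / ‖x‖ := div_nonneg (hFnn x hxball) (norm_nonneg x)
    rw [deltaFn]
    exact h1.trans (le_csSup (hbdd r h0 hr) hmem)
  have hdle : ∀ r : ℝ, 0 < r → r < R₀ → deltaFn m F r ≤ deltaOneFn m F r := by
    intro r h0 hr
    obtain ⟨x, hx⟩ := hpoint r h0
    rw [deltaFn]
    exact csSup_le ⟨F x / ‖x‖, ⟨x, ⟨by rw [hx]; exact h0, le_of_eq hx⟩, rfl⟩⟩ (hdub r h0 hr)
  have hd1nn : ∀ r : ℝ, 0 < r → r < R₀ → 0 ≤ deltaOneFn m F r := by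
    intro r h0 hr
    obtain ⟨x, -, hx⟩ := (hd1great r h0 hr).1
    rw [← hx]; exact norm_nonneg _
  constructor
  · -- δ₁ → 0 implies δ → 0
    intro h
    have hev : ∀ᶠ r in 𝓝[>] (0:ℝ), r ∈ Ioo (0:ℝ) R₀ :=
      Ioo_mem_nhdsGT_of_mem ⟨le_refl 0, hR₀⟩
    refine tendsto_of_tendsto_of_tendsto_of_le_of_le' tendsto_const_nhds h ?_ ?_
    · filter_upwards [hev] with r hr using hdnn r hr.1 hr.2
    · filter_upwards [hev] with r hr using hdle r hr.1 hr.2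
  · -- δ → 0 implies δ₁ → 0
    intro h
    have hmap : Tendsto (fun r : ℝ => 2 * r) (𝓝[>] (0:ℝ)) (𝓝[>] (0:ℝ)) := by
      refine tendsto_nhdsWithin_of_tendsto_nhds_of_eventually_within _ ?_ ?_
      · have h2 : Tendsto (fun r : ℝ => 2 * r) (𝓝 (0:ℝ)) (𝓝 (2 * 0)) :=
          (continuous_const.mul continuous_id).tendsto 0
        simpa using h2.mono_left nhdsWithin_le_nhds
      · filter_upwards [self_mem_nhdsWithin] with r hr
        exact mul_pos two_pos (mem_Ioi.mp hr)
    have h2 : Tendsto (fun r : ℝ => 2 * deltaFn m F (2*r)) (𝓝[>] (0:ℝ)) (𝓝 0) := by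
      have := (h.comp hmap).const_mul (2:ℝ)
      simpa using this
    have hev : ∀ᶠ r in 𝓝[>] (0:ℝ), r ∈ Ioo (0:ℝ) (R₀/2) :=
      Ioo_mem_nhdsGT_of_mem ⟨le_refl 0, half_pos hR₀⟩
    refine tendsto_of_tendsto_of_tendsto_of_le_of_le' tendsto_const_nhds h2 ?_ ?_
    · filter_upwards [hev] with r hr
      exact hd1nn r hr.1 (hr.2.trans (half_lt_self hR₀))
    · filter_upwards [hev] with r hr
      obtain ⟨h0, hrhalf⟩ := hr
      have hrR : r < R₀ := hrhalf.trans (half_lt_self hR₀)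
      have h2r0 : (0:ℝ) < 2 * r := by linarith
      have h2rR : 2 * r < R₀ := by linarith
      have hδ2nn : 0 ≤ deltaFn m F (2*r) := hdnn _ h2r0 h2rR
      obtain ⟨⟨x₀, hx₀mem, hx₀eq⟩, -⟩ := hd1great r h0 hrR
      rw [← hx₀eq]
      set g := gradient F x₀ with hg
      show ‖g‖ ≤ 2 * deltaFn m F (2*r)
      rcases eq_or_ne g 0 with hg0 | hg0
      · rw [hg0]; simpa using mul_nonneg (by norm_num : (0:ℝ) ≤ 2) hδ2nn
      · have hgpos : 0 < ‖g‖ := norm_pos_iff.2 hg0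
        set y := x₀ + (r * ‖g‖⁻¹) • g with hy
        have hx₀r : ‖x₀‖ ≤ r := by simpa [mem_closedBall, dist_zero_right] using hx₀mem
        have hsnorm : ‖(r * ‖g‖⁻¹) • g‖ = r := by
          rw [norm_smul, Real.norm_eq_abs, abs_of_pos (mul_pos h0 (inv_pos.2 hgpos))]
          field_simp
        have hynorm : ‖y‖ ≤ 2 * r := by
          calc ‖y‖ ≤ ‖x₀‖ + ‖(r * ‖g‖⁻¹) • g‖ := norm_add_le _ _
            _ ≤ r + r := by rw [hsnorm]; linarith
            _ = 2 * r := by ring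
        have hyball : y ∈ ball (0 : EuclideanSpace ℝ (Fin m)) R₀ := by
          rw [mem_ball, dist_zero_right]
          exact lt_of_le_of_lt hynorm h2rR
        have hx₀ball : x₀ ∈ ball (0 : EuclideanSpace ℝ (Fin m)) R₀ :=
          closedBall_subset_ball hrR hx₀mem
        have hinner : ⟪g, y - x₀⟫_ℝ = r * ‖g‖ := by
          rw [hy]
          simp only [add_sub_cancel_left]
          rw [real_inner_smul_right, real_inner_self_eq_norm_sq]
          field_simp
        have hkey : r * ‖g‖ ≤ F y := by
          have hgi := grad_ineq (convex_ball (0 : EuclideanSpace ℝ (Fin m)) R₀) hFconv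
            hx₀ball hyball (hdAt x₀ hx₀ball)
          rw [← hg, hinner] at hgi
          have hFx₀ : 0 ≤ F x₀ := hFnn x₀ hx₀ball
          linarith
        rcases eq_or_lt_of_le (norm_nonneg y) with hy0 | hy0
        · -- y = 0, so F y = 0, contradiction-ish: ‖g‖ ≤ 0
          exfalso
          have hyzero : y = 0 := by rwa [eq_comm, norm_eq_zero] at hy0
          rw [hyzero, hF0] at hkey
          nlinarith
        · have hmemy : F y / ‖y‖ ∈
              (fun x' : EuclideanSpace ℝ (Fin m) => F x' / ‖x'‖) ''
                {x' : EuclideanSpace ℝ (Fin m) | 0 < ‖x'‖ ∧ ‖x'‖ ≤ 2*r} :=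
            ⟨y, ⟨hy0, hynorm⟩, rfl⟩
          have hyle : F y / ‖y‖ ≤ deltaFn m F (2*r) := by
            rw [deltaFn]
            exact le_csSup (hbdd _ h2r0 h2rR) hmemy
          have hFy : F y ≤ deltaFn m F (2*r) * (2*r) := by
            have h1 : F y ≤ deltaFn m F (2*r) * ‖y‖ := by
              rwa [div_le_iff₀ hy0] at hyle
            exact h1.trans (mul_le_mul_of_nonneg_left hynorm hδ2nn)
          have hfin : r * ‖g‖ ≤ deltaFn m F (2*r) * (2*r) := hkey.trans hFy
          nlinarith

theorem delta_tendsto_zero_iff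
    (n : ℕ) (hn : 2 ≤ n) (R₀ : ℝ) (hR₀ : 0 < R₀)
    (F : EuclideanSpace ℝ (Fin (n - 1)) → ℝ)
    (hFconv : ConvexOn ℝ (ball (0 : EuclideanSpace ℝ (Fin (n - 1))) R₀) F)
    (hFdiff : ContDiffOn ℝ 1 F (ball (0 : EuclideanSpace ℝ (Fin (n - 1))) R₀))
    (hFnn : ∀ x' ∈ ball (0 : EuclideanSpace ℝ (Fin (n - 1))) R₀, 0 ≤ F x')
    (hF0 : F 0 = 0) :
    Tendsto (deltaOneFn (n - 1) F) (𝓝[>] (0 : ℝ)) (𝓝 0) ↔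
      Tendsto (deltaFn (n - 1) F) (𝓝[>] (0 : ℝ)) (𝓝 0) :=
  main_aux (n - 1) (by omega) R₀ hR₀ F hFconv hFdiff hFnn hF0
end
end

section
/- Let n ≥ 2, R₀ > 0, and let F : B_{R₀} → ℝ be a convex continuously differentiable function on the open ball B_{R₀} ⊂ ℝ^{n-1} with F ≥ 0 and F(0) = 0. Define δ(r) = sup_{0<|x'|≤r} F(x')/|x'| and δ₁(r) = sup_{|x'|≤r} |∇F(x')| for 0 < r < R₀. Then ∫₀^{R₀/2} δ(r)/r dr < ∞ if and only if ∫₀^{R₀/2} δ₁(r)/r dr < ∞; that is, δ satisfies the Dini condition at zero if and only if δ₁ does. -/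
/-!
Statement 6: `δ` satisfies the Dini condition at zero iff `δ₁` does
(part (b) of Lemma `Proposition` of the paper).
-/

noncomputable section
open Metric Set Filter Topology
open scoped ENNReal

namespace DeltaAux

variable {m : ℕ} {F : EuclideanSpace ℝ (Fin m) → ℝ} {R₀ : ℝ}

local notation "E" => EuclideanSpace ℝ (Fin m)

lemma norm_gradient_eq (x : E) : ‖gradient F x‖ = ‖fderiv ℝ F x‖ := by
  rw [gradient]
  exact LinearIsometryEquiv.norm_map _ _

lemma gradNorm_contOn (hFdiff : ContDiffOn ℝ 1 F (ball 0 R₀)) :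
    ContinuousOn (fun x : E => ‖gradient F x‖) (ball 0 R₀) := by
  have h1 : ContinuousOn (fderiv ℝ F) (ball (0 : E) R₀) :=
    hFdiff.continuousOn_fderiv_of_isOpen isOpen_ball le_rfl
  exact (continuous_norm.comp
    (InnerProductSpace.toDual ℝ E).symm.continuous).comp_continuousOn h1

lemma deltaOne_bddAbove (hFdiff : ContDiffOn ℝ 1 F (ball 0 R₀)) {ρ : ℝ} (hρR : ρ < R₀) :
    BddAbove ((fun x : E => ‖gradient F x‖) '' closedBall (0 : E) ρ) :=
  ((isCompact_closedBall _ _).image_of_continuousOn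
    ((gradNorm_contOn hFdiff).mono (closedBall_subset_ball hρR))).bddAbove

lemma deltaOne_nonneg {ρ : ℝ} : 0 ≤ deltaOneFn m F ρ := by
  apply Real.sSup_nonneg
  rintro _ ⟨x, -, rfl⟩
  positivity

lemma norm_fderiv_le (hFdiff : ContDiffOn ℝ 1 F (ball 0 R₀)) {ρ : ℝ} (hρR : ρ < R₀)
    {x : E} (hx : x ∈ closedBall (0 : E) ρ) : ‖fderiv ℝ F x‖ ≤ deltaOneFn m F ρ := by
  rw [← norm_gradient_eq]
  exact le_csSup (deltaOne_bddAbove hFdiff hρR) ⟨x, hx, rfl⟩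

lemma F_sub_le (hFdiff : ContDiffOn ℝ 1 F (ball 0 R₀)) {ρ : ℝ} (hρR : ρ < R₀)
    {x y : E} (hx : x ∈ closedBall (0 : E) ρ) (hy : y ∈ closedBall (0 : E) ρ) :
    F y - F x ≤ deltaOneFn m F ρ * ‖y - x‖ := by
  have hder : ∀ z ∈ closedBall (0 : E) ρ,
      HasFDerivWithinAt F (fderiv ℝ F z) (closedBall (0 : E) ρ) z := fun z hz =>
    (((hFdiff.differentiableOn one_ne_zero).differentiableAt
      (isOpen_ball.mem_nhds (closedBall_subset_ball hρR hz))).hasFDerivAt).hasFDerivWithinAt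
  calc F y - F x ≤ ‖F y - F x‖ := le_abs_self _
    _ ≤ deltaOneFn m F ρ * ‖y - x‖ :=
      (convex_closedBall _ _).norm_image_sub_le_of_norm_hasFDerivWithin_le hder
        (fun z hz => norm_fderiv_le hFdiff hρR hz) hx hy

lemma F_le (hFdiff : ContDiffOn ℝ 1 F (ball 0 R₀)) (hF0 : F 0 = 0) {ρ : ℝ} (hρR : ρ < R₀)
    {y : E} (hy : ‖y‖ ≤ ρ) : F y ≤ deltaOneFn m F ρ * ‖y‖ := by
  have h0 : (0 : E) ∈ closedBall (0 : E) ρ := by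
    simp [mem_closedBall_zero_iff]
    exact le_trans (norm_nonneg y) hy
  have hyb : y ∈ closedBall (0 : E) ρ := by simpa [mem_closedBall_zero_iff] using hy
  have := F_sub_le hFdiff hρR h0 hyb
  simpa [hF0] using this

lemma delta_bddAbove (hFdiff : ContDiffOn ℝ 1 F (ball 0 R₀)) (hF0 : F 0 = 0)
    {ρ : ℝ} (hρR : ρ < R₀) :
    BddAbove ((fun x' : E => F x' / ‖x'‖) '' {x' : E | 0 < ‖x'‖ ∧ ‖x'‖ ≤ ρ}) := by
  refine ⟨deltaOneFn m F ρ, ?_⟩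
  rintro _ ⟨y, ⟨h1, h2⟩, rfl⟩
  rw [div_le_iff₀ h1]
  exact F_le hFdiff hF0 hρR h2

lemma delta_nonneg (hFnn : ∀ x' ∈ ball (0 : E) R₀, 0 ≤ F x') {ρ : ℝ} (hρR : ρ < R₀) :
    0 ≤ deltaFn m F ρ := by
  apply Real.sSup_nonneg
  rintro _ ⟨y, ⟨h1, h2⟩, rfl⟩
  have : y ∈ ball (0 : E) R₀ := by
    rw [mem_ball_zero_iff]; linarith
  exact div_nonneg (hFnn y this) (norm_nonneg _)

lemma le_delta (hFdiff : ContDiffOn ℝ 1 F (ball 0 R₀)) (hF0 : F 0 = 0)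
    {ρ : ℝ} (hρR : ρ < R₀) {y : E} (h1 : 0 < ‖y‖) (h2 : ‖y‖ ≤ ρ) :
    F y / ‖y‖ ≤ deltaFn m F ρ :=
  le_csSup (delta_bddAbove hFdiff hF0 hρR) ⟨y, ⟨h1, h2⟩, rfl⟩

lemma delta_le_deltaOne (hFdiff : ContDiffOn ℝ 1 F (ball 0 R₀)) (hF0 : F 0 = 0)
    {ρ : ℝ} (hρR : ρ < R₀) : deltaFn m F ρ ≤ deltaOneFn m F ρ := by
  refine Real.sSup_le ?_ deltaOne_nonneg
  rintro _ ⟨y, ⟨h1, h2⟩, rfl⟩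
  rw [div_le_iff₀ h1]
  exact F_le hFdiff hF0 hρR h2

lemma deltaOne_mono (hFdiff : ContDiffOn ℝ 1 F (ball 0 R₀)) {ρ ρ' : ℝ}
    (h : ρ ≤ ρ') (hρ'R : ρ' < R₀) : deltaOneFn m F ρ ≤ deltaOneFn m F ρ' := by
  refine Real.sSup_le ?_ deltaOne_nonneg
  rintro _ ⟨x, hx, rfl⟩
  exact le_csSup (deltaOne_bddAbove hFdiff hρ'R)
    ⟨x, closedBall_subset_closedBall h hx, rfl⟩

lemma deltaOne_le_two_delta (hFconv : ConvexOn ℝ (ball (0 : E) R₀) F)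
    (hFdiff : ContDiffOn ℝ 1 F (ball 0 R₀))
    (hFnn : ∀ x' ∈ ball (0 : E) R₀, 0 ≤ F x') (hF0 : F 0 = 0)
    {r : ℝ} (hr : 0 < r) (h2r : 2 * r < R₀) :
    deltaOneFn m F r ≤ 2 * deltaFn m F (2 * r) := by
  have hδnn : 0 ≤ deltaFn m F (2 * r) := delta_nonneg hFnn h2r
  refine Real.sSup_le ?_ (by linarith)
  rintro _ ⟨x, hx, rfl⟩
  show ‖gradient F x‖ ≤ 2 * deltaFn m F (2 * r)
  have hxr : ‖x‖ ≤ r := by rwa [mem_closedBall_zero_iff] at hx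
  by_cases hg : gradient F x = 0
  · rw [hg]; simp; linarith
  set g := gradient F x with hgdef
  have hgn : (0 : ℝ) < ‖g‖ := norm_pos_iff.2 hg
  set v : E := ‖g‖⁻¹ • g with hvdef
  have hvnorm : ‖v‖ = 1 := by
    rw [hvdef, norm_smul, norm_inv, norm_norm]
    field_simp
  set c : ℝ → E := fun t => t • v + x with hcdef
  have hc0 : c 0 = x := by simp [hcdef]
  -- convexity along the line
  set A : ℝ →ᵃ[ℝ] E := AffineMap.lineMap x (x + v) with hAdef
  have hA : ⇑A = c := by
    ext t
    simp [hAdef, hcdef, AffineMap.lineMap_apply_module']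
  have hconv : ConvexOn ℝ (c ⁻¹' ball (0 : E) R₀) (F ∘ c) := by
    have := hFconv.comp_affineMap A
    rwa [hA] at this
  have hxball : x ∈ ball (0 : E) R₀ := by
    rw [mem_ball_zero_iff]; linarith
  have h0S : (0 : ℝ) ∈ c ⁻¹' ball (0 : E) R₀ := by
    simp only [mem_preimage, hc0]; exact hxball
  have hrS : r ∈ c ⁻¹' ball (0 : E) R₀ := by
    simp only [mem_preimage, mem_ball_zero_iff, hcdef]
    calc ‖r • v + x‖ ≤ ‖r • v‖ + ‖x‖ := norm_add_le _ _
      _ = |r| * ‖v‖ + ‖x‖ := by rw [norm_smul]; rfl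
      _ ≤ r * 1 + r := by
          rw [abs_of_pos hr, hvnorm]
          linarith
      _ < R₀ := by linarith
  -- derivative of F along the line at 0
  have hFdx : DifferentiableAt ℝ F x :=
    (hFdiff.differentiableOn one_ne_zero).differentiableAt (isOpen_ball.mem_nhds hxball)
  have hcurve : HasDerivAt c v 0 := by
    have h1 : HasDerivAt (fun t : ℝ => t • v) ((1 : ℝ) • v) 0 :=
      (hasDerivAt_id (0 : ℝ)).smul_const v
    simpa [hcdef, one_smul] using h1.add_const x
  have hF' : HasFDerivAt F (fderiv ℝ F x) (c 0) := by
    rw [hc0]; exact hFdx.hasFDerivAt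
  have hderiv : HasDerivAt (F ∘ c) (fderiv ℝ F x v) 0 := hF'.comp_hasDerivAt 0 hcurve
  have hslope := hconv.le_slope_of_hasDerivAt h0S hrS hr hderiv
  have hval : fderiv ℝ F x v = ‖g‖ := by
    have hdual : fderiv ℝ F x = InnerProductSpace.toDual ℝ E g :=
      ((InnerProductSpace.toDual ℝ E).apply_symm_apply (fderiv ℝ F x)).symm
    rw [hdual, InnerProductSpace.toDual_apply_apply, hvdef, real_inner_smul_right,
      real_inner_self_eq_norm_sq, sq]
    field_simp
  have hslope' : slope (F ∘ c) 0 r = (F (c r) - F x) / r := by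
    rw [slope_def_field]
    simp [hc0]
  set y := c r with hydef
  have hy2r : ‖y‖ ≤ 2 * r := by
    calc ‖y‖ ≤ ‖r • v‖ + ‖x‖ := norm_add_le _ _
      _ = |r| * ‖v‖ + ‖x‖ := by rw [norm_smul]; rfl
      _ ≤ r * 1 + r := by rw [abs_of_pos hr, hvnorm]; linarith
      _ = 2 * r := by ring
  have hFy : F y ≤ deltaFn m F (2 * r) * (2 * r) := by
    rcases (norm_nonneg y).eq_or_lt with h0 | hpos
    · have : y = 0 := by rwa [eq_comm, norm_eq_zero] at h0
      rw [this, hF0]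
      positivity
    · have h1 := le_delta hFdiff hF0 h2r hpos hy2r
      rw [div_le_iff₀ hpos] at h1
      calc F y ≤ deltaFn m F (2 * r) * ‖y‖ := h1
        _ ≤ deltaFn m F (2 * r) * (2 * r) := by
            exact mul_le_mul_of_nonneg_left hy2r hδnn
  have hFx0 : 0 ≤ F x := hFnn x hxball
  rw [hval, hslope'] at hslope
  rw [le_div_iff₀ hr] at hslope
  nlinarith

lemma lintegral_comp_double_le (f : ℝ → ℝ≥0∞) {a : ℝ} :
    (∫⁻ r in Ioo (0 : ℝ) a, f (2 * r)) ≤ ∫⁻ s in Ioo (0 : ℝ) (2 * a), f s := by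
  have hemb : MeasurableEmbedding (fun x : ℝ => 2 * x) :=
    (Homeomorph.mulLeft₀ (2 : ℝ) two_ne_zero).measurableEmbedding
  have hpre : (fun x : ℝ => 2 * x) ⁻¹' Ioo 0 (2 * a) = Ioo (0 : ℝ) a := by
    ext t
    simp only [mem_preimage, mem_Ioo]
    constructor <;> rintro ⟨h1, h2⟩ <;> constructor <;> linarith
  have hmap : MeasureTheory.Measure.map (fun x : ℝ => 2 * x)
      (MeasureTheory.volume.restrict (Ioo (0 : ℝ) a))
      = (ENNReal.ofReal |(2 : ℝ)⁻¹| • MeasureTheory.volume).restrict (Ioo (0 : ℝ) (2 * a)) := by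
    rw [← hpre, ← MeasureTheory.Measure.restrict_map (measurable_const_mul 2) measurableSet_Ioo,
      Real.map_volume_mul_left two_ne_zero]
  calc (∫⁻ r in Ioo (0 : ℝ) a, f (2 * r))
      = ∫⁻ s, f s ∂(MeasureTheory.Measure.map (fun x : ℝ => 2 * x)
          (MeasureTheory.volume.restrict (Ioo (0 : ℝ) a))) := (hemb.lintegral_map f).symm
    _ = ENNReal.ofReal |(2 : ℝ)⁻¹| * ∫⁻ s in Ioo (0 : ℝ) (2 * a), f s := by
        rw [hmap, MeasureTheory.Measure.restrict_smul, MeasureTheory.lintegral_smul_measure, smul_eq_mul]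
    _ ≤ 1 * ∫⁻ s in Ioo (0 : ℝ) (2 * a), f s := by
        refine mul_le_mul_left ?_ _
        rw [ENNReal.ofReal_le_one]
        rw [abs_of_pos (by norm_num : (0:ℝ) < 2⁻¹)]
        norm_num
    _ = ∫⁻ s in Ioo (0 : ℝ) (2 * a), f s := one_mul _

end DeltaAux

theorem delta_dini_iff
    (n : ℕ) (hn : 2 ≤ n) (R₀ : ℝ) (hR₀ : 0 < R₀)
    (F : EuclideanSpace ℝ (Fin (n - 1)) → ℝ)
    (hFconv : ConvexOn ℝ (ball (0 : EuclideanSpace ℝ (Fin (n - 1))) R₀) F)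
    (hFdiff : ContDiffOn ℝ 1 F (ball (0 : EuclideanSpace ℝ (Fin (n - 1))) R₀))
    (hFnn : ∀ x' ∈ ball (0 : EuclideanSpace ℝ (Fin (n - 1))) R₀, 0 ≤ F x')
    (hF0 : F 0 = 0) :
    (∫⁻ r in Set.Ioo (0 : ℝ) (R₀ / 2), ENNReal.ofReal (deltaFn (n - 1) F r / r)) < ⊤ ↔
      (∫⁻ r in Set.Ioo (0 : ℝ) (R₀ / 2), ENNReal.ofReal (deltaOneFn (n - 1) F r / r)) < ⊤ := by
  set g₁ : ℝ → ℝ≥0∞ := fun s => ENNReal.ofReal (deltaFn (n - 1) F s / s) with hg₁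
  set g₂ : ℝ → ℝ≥0∞ := fun s => ENNReal.ofReal (deltaOneFn (n - 1) F s / s) with hg₂
  constructor
  · intro h
    -- split the integral at R₀/4
    have hsplit : (∫⁻ r in Ioo (0 : ℝ) (R₀ / 2), g₂ r)
        ≤ (∫⁻ r in Ioo (0 : ℝ) (R₀ / 4), g₂ r) + ∫⁻ r in Ico (R₀ / 4) (R₀ / 2), g₂ r := by
      refine le_trans (MeasureTheory.lintegral_mono_set ?_)
        (MeasureTheory.lintegral_union_le _ _ _)
      intro t ht
      rcases lt_or_ge t (R₀ / 4) with h' | h'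
      · exact Or.inl ⟨ht.1, h'⟩
      · exact Or.inr ⟨h', ht.2⟩
    have hterm1 : (∫⁻ r in Ioo (0 : ℝ) (R₀ / 4), g₂ r) < ⊤ := by
      have hptwise : ∀ r ∈ Ioo (0 : ℝ) (R₀ / 4), g₂ r ≤ 4 * g₁ (2 * r) := by
        intro r hr
        have hr0 : 0 < r := hr.1
        have h2r : 2 * r < R₀ := by
          have := hr.2; linarith
        have hle := DeltaAux.deltaOne_le_two_delta hFconv hFdiff hFnn hF0 hr0 h2r
        have hineq : deltaOneFn (n - 1) F r / r ≤ 4 * (deltaFn (n - 1) F (2 * r) / (2 * r)) := by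
          rw [div_le_iff₀ hr0]
          have : 4 * (deltaFn (n - 1) F (2 * r) / (2 * r)) * r = 2 * deltaFn (n - 1) F (2 * r) := by
            field_simp
            ring
          rw [this]
          exact hle
        calc g₂ r ≤ ENNReal.ofReal (4 * (deltaFn (n - 1) F (2 * r) / (2 * r))) :=
              ENNReal.ofReal_le_ofReal hineq
          _ = 4 * g₁ (2 * r) := by
              rw [ENNReal.ofReal_mul (by norm_num : (0:ℝ) ≤ 4)]
              norm_num [hg₁]
      calc (∫⁻ r in Ioo (0 : ℝ) (R₀ / 4), g₂ r)
          ≤ ∫⁻ r in Ioo (0 : ℝ) (R₀ / 4), 4 * g₁ (2 * r) := by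
            refine MeasureTheory.lintegral_mono_ae ?_
            filter_upwards [MeasureTheory.ae_restrict_mem measurableSet_Ioo] with r hr
            exact hptwise r hr
        _ = 4 * ∫⁻ r in Ioo (0 : ℝ) (R₀ / 4), g₁ (2 * r) :=
            MeasureTheory.lintegral_const_mul' 4 _ (by simp)
        _ ≤ 4 * ∫⁻ s in Ioo (0 : ℝ) (2 * (R₀ / 4)), g₁ s :=
            mul_le_mul_right (DeltaAux.lintegral_comp_double_le g₁) 4
        _ = 4 * ∫⁻ s in Ioo (0 : ℝ) (R₀ / 2), g₁ s := by ring_nf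
        _ < ⊤ := by
            exact ENNReal.mul_lt_top (by simp) h
    have hterm2 : (∫⁻ r in Ico (R₀ / 4) (R₀ / 2), g₂ r) < ⊤ := by
      set M := deltaOneFn (n - 1) F (R₀ / 2) with hM
      have hMnn : 0 ≤ M := DeltaAux.deltaOne_nonneg
      have hC : ∀ r ∈ Ico (R₀ / 4) (R₀ / 2), g₂ r ≤ ENNReal.ofReal (M / (R₀ / 4)) := by
        intro r hr
        have hr4 : R₀ / 4 ≤ r := hr.1
        have hrR : r < R₀ / 2 := hr.2
        have hr0 : 0 < r := by linarith
        have h1 : deltaOneFn (n - 1) F r ≤ M :=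
          DeltaAux.deltaOne_mono hFdiff (le_of_lt hrR) (by linarith)
        apply ENNReal.ofReal_le_ofReal
        calc deltaOneFn (n - 1) F r / r ≤ M / r :=
              (div_le_div_iff_of_pos_right hr0).mpr h1
          _ ≤ M / (R₀ / 4) := div_le_div_of_nonneg_left hMnn (by linarith) hr4
      calc (∫⁻ r in Ico (R₀ / 4) (R₀ / 2), g₂ r)
          ≤ ∫⁻ _ in Ico (R₀ / 4) (R₀ / 2), ENNReal.ofReal (M / (R₀ / 4)) := by
            refine MeasureTheory.lintegral_mono_ae ?_
            filter_upwards [MeasureTheory.ae_restrict_mem measurableSet_Ico] with r hr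
            exact hC r hr
        _ = ENNReal.ofReal (M / (R₀ / 4)) * MeasureTheory.volume (Ico (R₀ / 4) (R₀ / 2)) :=
            MeasureTheory.setLIntegral_const _ _
        _ < ⊤ := ENNReal.mul_lt_top ENNReal.ofReal_lt_top (by simp [Real.volume_Ico])
    exact lt_of_le_of_lt hsplit (ENNReal.add_lt_top.2 ⟨hterm1, hterm2⟩)
  · intro h
    refine lt_of_le_of_lt ?_ h
    refine MeasureTheory.lintegral_mono_ae ?_
    filter_upwards [MeasureTheory.ae_restrict_mem measurableSet_Ioo] with r hr
    have hr0 : (0:ℝ) < r := hr.1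
    have hrR : r < R₀ := by
      have := hr.2; linarith
    apply ENNReal.ofReal_le_ofReal
    exact (div_le_div_iff_of_pos_right hr0).mpr
      (DeltaAux.delta_le_deltaOne hFdiff hF0 hrR)
end
end

section
/- Let n ≥ 2, R₀ > 0, and let F : B_{R₀} → ℝ be a convex continuously differentiable function on the open ball B_{R₀} ⊂ ℝ^{n-1} with F ≥ 0 and F(0) = 0. Define δ(r) = sup_{0<|x'|≤r} F(x')/|x'| and δ₁(r) = sup_{|x'|≤r} |∇F(x')|. Then for every r ∈ (0, R₀/2) one has δ(2r) ≥ δ₁(r)/2. (Indeed, if x'_* with |x'_*| ≤ r satisfies |∇F(x'_*)| = δ₁(r) and z' = x'_* + r ∇F(x'_*)/|∇F(x'_*)|, then |z'| ≤ 2r and F(z') ≥ r δ₁(r).) -/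
/-!
Statement 8: `δ(2r) ≥ δ₁(r)/2` for `0 < r < R₀/2`, together with the auxiliary
claim that for a maximizer `x'_*` of `|∇F|` on the ball of radius `r` (with
nonvanishing gradient), the point `z' = x'_* + r ∇F(x'_*)/|∇F(x'_*)|` satisfies
`|z'| ≤ 2r` and `F(z') ≥ r δ₁(r)`.
-/

noncomputable section
open Metric Set Filter Topology

/-- The subgradient inequality for a differentiable convex function on an open set. -/
lemma grad_subgradient {E : Type*} [NormedAddCommGroup E] [InnerProductSpace ℝ E]
    [CompleteSpace E] {s : Set E} (hs : IsOpen s) {F : E → ℝ}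
    (hconv : ConvexOn ℝ s F) (hdiff : DifferentiableOn ℝ F s)
    {x y : E} (hx : x ∈ s) (hy : y ∈ s) :
    F x + @inner ℝ _ _ (gradient F x) (y - x) ≤ F y := by
  rcases eq_or_ne x y with rfl | hne
  · simp
  have hxd : DifferentiableAt ℝ F x := hdiff.differentiableAt (hs.mem_nhds hx)
  have hfd : fderiv ℝ F x (y - x) = @inner ℝ _ _ (gradient F x) (y - x) := by
    have h := hxd.hasGradientAt
    rw [hasGradientAt_iff_hasFDerivAt] at h
    rw [h.fderiv, InnerProductSpace.toDual_apply_apply]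
  have hg : ConvexOn ℝ (Icc (0:ℝ) 1) (fun t : ℝ => F (x + t • (y - x))) := by
    have h1 := hconv.comp_affineMap (AffineMap.lineMap x y : ℝ →ᵃ[ℝ] E)
    have h2 : Icc (0:ℝ) 1 ⊆ (AffineMap.lineMap x y : ℝ →ᵃ[ℝ] E) ⁻¹' s := by
      intro t ht
      have := hconv.1.add_smul_sub_mem hx hy ht
      simpa [AffineMap.lineMap_apply, vsub_eq_sub, vadd_eq_add, add_comm] using this
    have h3 := (h1.subset h2 (convex_Icc 0 1))
    have hfun : (F ∘ (AffineMap.lineMap x y : ℝ →ᵃ[ℝ] E)) =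
        fun t : ℝ => F (x + t • (y - x)) := by
      funext t
      simp [AffineMap.lineMap_apply, vsub_eq_sub, vadd_eq_add, add_comm]
    rwa [hfun] at h3
  have hder : HasDerivAt (fun t : ℝ => F (x + t • (y - x)))
      (@inner ℝ _ _ (gradient F x) (y - x)) 0 := by
    have h1 : HasDerivAt (fun t : ℝ => x + t • (y - x)) (y - x) 0 := by
      simpa using ((hasDerivAt_id (0:ℝ)).smul_const (y - x)).const_add x
    have h2 : HasFDerivAt F (fderiv ℝ F x) (x + (0:ℝ) • (y - x)) := by
      simpa using hxd.hasFDerivAt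
    have h3 := h2.comp_hasDerivAt 0 h1
    rw [hfd] at h3
    exact h3
  have hslope := hg.le_slope_of_hasDerivAt (left_mem_Icc.2 zero_le_one)
    (right_mem_Icc.2 zero_le_one) one_pos hder
  rw [slope_def_field] at hslope
  simp only [zero_smul, add_zero, one_smul] at hslope
  have : x + (y - x) = y := by abel
  rw [this] at hslope
  have h10 : (F y - F x) / (1 - 0) = F y - F x := by norm_num
  rw [h10] at hslope
  linarith

theorem delta_two_r_ge_half_delta_one
    (n : ℕ) (hn : 2 ≤ n) (R₀ : ℝ) (hR₀ : 0 < R₀)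
    (F : EuclideanSpace ℝ (Fin (n - 1)) → ℝ)
    (hFconv : ConvexOn ℝ (ball (0 : EuclideanSpace ℝ (Fin (n - 1))) R₀) F)
    (hFdiff : ContDiffOn ℝ 1 F (ball (0 : EuclideanSpace ℝ (Fin (n - 1))) R₀))
    (hFnn : ∀ x' ∈ ball (0 : EuclideanSpace ℝ (Fin (n - 1))) R₀, 0 ≤ F x')
    (hF0 : F 0 = 0) :
    ∀ r ∈ Set.Ioo (0 : ℝ) (R₀ / 2),
      deltaOneFn (n - 1) F r / 2 ≤ deltaFn (n - 1) F (2 * r) ∧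
      ∀ xstar : EuclideanSpace ℝ (Fin (n - 1)), ‖xstar‖ ≤ r →
        ‖gradient F xstar‖ = deltaOneFn (n - 1) F r → gradient F xstar ≠ 0 →
        ‖xstar + (r / ‖gradient F xstar‖) • gradient F xstar‖ ≤ 2 * r ∧
        r * deltaOneFn (n - 1) F r ≤
          F (xstar + (r / ‖gradient F xstar‖) • gradient F xstar) := by
  intro r hr
  obtain ⟨hr0, hr2⟩ := hr
  have h2r : 2 * r < R₀ := by linarith
  have hdo : DifferentiableOn ℝ F (ball (0 : EuclideanSpace ℝ (Fin (n - 1))) R₀) := hFdiff.differentiableOn one_ne_zero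
  -- the key inequality for any point with nonzero gradient
  have key : ∀ x : EuclideanSpace ℝ (Fin (n - 1)), ‖x‖ ≤ r → gradient F x ≠ 0 →
      ‖x + (r / ‖gradient F x‖) • gradient F x‖ ≤ 2 * r ∧
      F x + r * ‖gradient F x‖ ≤ F (x + (r / ‖gradient F x‖) • gradient F x) := by
    intro x hxr hgx
    set g := gradient F x with hgdef
    have hgn : (0:ℝ) < ‖g‖ := norm_pos_iff.2 hgx
    set z := x + (r / ‖g‖) • g with hzdef
    have hznorm : ‖z‖ ≤ 2 * r := by
      have : ‖(r / ‖g‖) • g‖ = r := by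
        rw [norm_smul, Real.norm_eq_abs, abs_of_nonneg (by positivity)]
        field_simp
      calc ‖z‖ ≤ ‖x‖ + ‖(r / ‖g‖) • g‖ := norm_add_le _ _
        _ ≤ r + r := by rw [this]; linarith
        _ = 2 * r := by ring
    refine ⟨hznorm, ?_⟩
    have hxmem : x ∈ ball (0 : EuclideanSpace ℝ (Fin (n - 1))) R₀ := by
      simp only [mem_ball, dist_zero_right]; linarith
    have hzmem : z ∈ ball (0 : EuclideanSpace ℝ (Fin (n - 1))) R₀ := by
      simp only [mem_ball, dist_zero_right]; linarith
    have hsub := grad_subgradient isOpen_ball hFconv hdo hxmem hzmem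
    have hzx : z - x = (r / ‖g‖) • g := by rw [hzdef]; abel
    rw [hzx] at hsub
    have hin : @inner ℝ _ _ g ((r / ‖g‖) • g) = r * ‖g‖ := by
      rw [real_inner_smul_right, real_inner_self_eq_norm_sq]
      field_simp
    rw [← hgdef, hin] at hsub
    exact hsub
  -- bound: F x ≤ ‖gradient F x‖ * ‖x‖ on the ball
  have hFle : ∀ x : EuclideanSpace ℝ (Fin (n - 1)), x ∈ ball (0 : EuclideanSpace ℝ (Fin (n - 1))) R₀ → F x ≤ ‖gradient F x‖ * ‖x‖ := by
    intro x hx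
    have h0 : (0 : EuclideanSpace ℝ (Fin (n - 1))) ∈ ball (0 : EuclideanSpace ℝ (Fin (n - 1))) R₀ := by simp [hR₀]
    have hsub := grad_subgradient isOpen_ball hFconv hdo hx h0
    rw [hF0, zero_sub, inner_neg_right] at hsub
    have := real_inner_le_norm (gradient F x) x
    linarith
  -- boundedness of the set defining deltaFn (2r)
  have hgradbd : ∃ C : ℝ, ∀ x ∈ closedBall (0 : EuclideanSpace ℝ (Fin (n - 1))) (2*r), ‖gradient F x‖ ≤ C := by
    have hcont : ContinuousOn (fderiv ℝ F) (closedBall (0 : EuclideanSpace ℝ (Fin (n - 1))) (2*r)) :=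
      (hFdiff.continuousOn_fderiv_of_isOpen isOpen_ball le_rfl).mono
        (closedBall_subset_ball h2r)
    obtain ⟨C, hC⟩ := (isCompact_closedBall (0 : EuclideanSpace ℝ (Fin (n - 1))) (2*r)).exists_bound_of_continuousOn hcont
    refine ⟨C, fun x hx => ?_⟩
    have hnorm : ‖gradient F x‖ = ‖fderiv ℝ F x‖ := by
      rw [gradient]
      exact (InnerProductSpace.toDual ℝ (EuclideanSpace ℝ (Fin (n - 1)))).symm.norm_map _
    rw [hnorm]
    exact hC x hx
  obtain ⟨C, hC⟩ := hgradbd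
  have hbdd : BddAbove ((fun x' => F x' / ‖x'‖) '' {x' : EuclideanSpace ℝ (Fin (n - 1)) | 0 < ‖x'‖ ∧ ‖x'‖ ≤ 2*r}) := by
    refine ⟨C, ?_⟩
    rintro v ⟨x, ⟨hx0, hx2⟩, rfl⟩
    have hxball : x ∈ ball (0 : EuclideanSpace ℝ (Fin (n - 1))) R₀ := by
      simp only [mem_ball, dist_zero_right]; linarith
    have hxcb : x ∈ closedBall (0 : EuclideanSpace ℝ (Fin (n - 1))) (2*r) := by
      simp only [mem_closedBall, dist_zero_right]; linarith
    have h1 := hFle x hxball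
    have h2 := hC x hxcb
    rw [div_le_iff₀ hx0]
    calc F x ≤ ‖gradient F x‖ * ‖x‖ := h1
      _ ≤ C * ‖x‖ := by nlinarith
  -- nonemptiness and nonnegativity of deltaFn (2r)
  have hδnn : 0 ≤ deltaFn (n-1) F (2*r) := by
    have hm : 0 < n - 1 := by omega
    set p : EuclideanSpace ℝ (Fin (n - 1)) := EuclideanSpace.single (⟨0, hm⟩ : Fin (n-1)) r with hp
    have hpn : ‖p‖ = r := by
      rw [hp, EuclideanSpace.norm_single, Real.norm_eq_abs, abs_of_pos hr0]
    have hpball : p ∈ ball (0 : EuclideanSpace ℝ (Fin (n - 1))) R₀ := by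
      simp only [mem_ball, dist_zero_right, hpn]; linarith
    have hmem : F p / ‖p‖ ∈ (fun x' => F x' / ‖x'‖) '' {x' : EuclideanSpace ℝ (Fin (n - 1)) | 0 < ‖x'‖ ∧ ‖x'‖ ≤ 2*r} :=
      ⟨p, ⟨by rw [hpn]; exact hr0, by rw [hpn]; linarith⟩, rfl⟩
    have hle := le_csSup hbdd hmem
    have : 0 ≤ F p / ‖p‖ := div_nonneg (hFnn p hpball) (norm_nonneg _)
    exact le_trans this hle
  -- main bound
  have hmain : deltaOneFn (n-1) F r ≤ 2 * deltaFn (n-1) F (2*r) := by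
    apply Real.sSup_le
    · rintro v ⟨x, hx, rfl⟩
      simp only [mem_closedBall, dist_zero_right] at hx
      show ‖gradient F x‖ ≤ 2 * deltaFn (n-1) F (2*r)
      by_cases hgx : gradient F x = 0
      · rw [hgx, norm_zero]; linarith
      · obtain ⟨hz1, hz2⟩ := key x hx hgx
        set g := gradient F x
        set z := x + (r / ‖g‖) • g
        have hgn : (0:ℝ) < ‖g‖ := norm_pos_iff.2 hgx
        have hxball : x ∈ ball (0 : EuclideanSpace ℝ (Fin (n - 1))) R₀ := by
          simp only [mem_ball, dist_zero_right]; linarith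
        have hFz : r * ‖g‖ ≤ F z := le_trans (by nlinarith [hFnn x hxball]) hz2
        have hz0 : 0 < ‖z‖ := by
          rcases eq_or_ne z 0 with h | h
          · exfalso; rw [h, hF0] at hFz; nlinarith
          · exact norm_pos_iff.2 h
        have hmem : F z / ‖z‖ ∈ (fun x' => F x' / ‖x'‖) '' {x' : EuclideanSpace ℝ (Fin (n - 1)) | 0 < ‖x'‖ ∧ ‖x'‖ ≤ 2*r} :=
          ⟨z, ⟨hz0, hz1⟩, rfl⟩
        have hle := le_csSup hbdd hmem
        have hzball : z ∈ ball (0 : EuclideanSpace ℝ (Fin (n - 1))) R₀ := by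
          simp only [mem_ball, dist_zero_right]; linarith
        have hFznn : 0 ≤ F z := hFnn z hzball
        have hchain : ‖g‖ / 2 ≤ F z / ‖z‖ := by
          calc ‖g‖ / 2 = r * ‖g‖ / (2*r) := by field_simp
            _ ≤ F z / (2*r) := by gcongr
            _ ≤ F z / ‖z‖ := by gcongr
        have : ‖g‖ / 2 ≤ deltaFn (n-1) F (2*r) := le_trans hchain hle
        linarith
    · linarith
  refine ⟨by linarith, ?_⟩
  intro xstar hxs hgeq hgne
  obtain ⟨hz1, hz2⟩ := key xstar hxs hgne
  refine ⟨hz1, ?_⟩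
  have hxball : xstar ∈ ball (0 : EuclideanSpace ℝ (Fin (n - 1))) R₀ := by
    simp only [mem_ball, dist_zero_right]; linarith
  have := hFnn xstar hxball
  rw [← hgeq]
  linarith
end
end

section
/- Let σ : [0,1] → ℝ be a nonnegative increasing function with σ(0) = 0 and σ(1) = 1 such that ∫₀¹ σ(t)/t dt < ∞. Define σ̃(t) = t · sup_{τ ∈ [t,1]} σ(τ)/τ for t ∈ (0,1] and σ̃(0) = 0. Then σ̃ belongs to the class D₁; in particular σ̃ is nondecreasing with σ̃(1) = 1, the function t ↦ σ̃(t)/t is nonincreasing on (0,1], ∫₀¹ σ̃(t)/t dt < ∞, and moreover σ(t) ≤ σ̃(t) for all t ∈ (0,1]. -/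
/-!
Statement 9: the regularization `σ̃(t) = t · sup_{τ∈[t,1]} σ(τ)/τ` of a
nonnegative increasing `σ` with `σ(0)=0`, `σ(1)=1` and summable `σ(t)/t`
belongs to the class `D₁`, and `σ ≤ σ̃` on `(0,1]` (Remark 1 of the paper).
-/

noncomputable section
open Set Filter Topology
open scoped ENNReal

/-- The class `D₁`. -/
structure IsD1 (σ : ℝ → ℝ) : Prop where
  nonneg : ∀ t ∈ Set.Icc (0 : ℝ) 1, 0 ≤ σ t
  mono : MonotoneOn σ (Set.Icc (0 : ℝ) 1)
  map_zero : σ 0 = 0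
  map_one : σ 1 = 1
  slope_anti : AntitoneOn (fun t => σ t / t) (Set.Ioc (0 : ℝ) 1)
  dini : ∫⁻ t in Set.Ioo (0 : ℝ) 1, ENNReal.ofReal (σ t / t) < ⊤

theorem regularization_mem_D1
    (σ : ℝ → ℝ)
    (hnn : ∀ t ∈ Set.Icc (0 : ℝ) 1, 0 ≤ σ t)
    (hmono : MonotoneOn σ (Set.Icc (0 : ℝ) 1))
    (h0 : σ 0 = 0) (h1 : σ 1 = 1)
    (hdini : ∫⁻ t in Set.Ioo (0 : ℝ) 1, ENNReal.ofReal (σ t / t) < ⊤)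
    (σt : ℝ → ℝ)
    (hσt0 : σt 0 = 0)
    (hσt : ∀ t ∈ Set.Ioc (0 : ℝ) 1,
      σt t = t * sSup ((fun τ => σ τ / τ) '' Set.Icc t 1)) :
    IsD1 σt ∧ ∀ t ∈ Set.Ioc (0 : ℝ) 1, σ t ≤ σt t := by
  classical
  set S : ℝ → ℝ := fun t => sSup ((fun τ => σ τ / τ) '' Set.Icc t 1) with hSdef
  have hσle1 : ∀ τ ∈ Set.Icc (0 : ℝ) 1, σ τ ≤ 1 := by
    intro τ hτ
    have := hmono hτ (by norm_num : (1:ℝ) ∈ Set.Icc (0:ℝ) 1) hτ.2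
    simpa [h1] using this
  have hne : ∀ t ∈ Set.Ioc (0:ℝ) 1, ((fun τ => σ τ / τ) '' Set.Icc t 1).Nonempty := by
    intro t ht
    exact ⟨σ 1 / 1, ⟨1, ⟨ht.2, le_refl 1⟩, rfl⟩⟩
  have hbdd : ∀ t ∈ Set.Ioc (0:ℝ) 1, BddAbove ((fun τ => σ τ / τ) '' Set.Icc t 1) := by
    intro t ht
    refine ⟨1 / t, ?_⟩
    rintro x ⟨τ, hτ, rfl⟩
    have hτ0 : 0 < τ := lt_of_lt_of_le ht.1 hτ.1
    have hστ : σ τ ≤ 1 := hσle1 τ ⟨le_of_lt hτ0, hτ.2⟩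
    calc σ τ / τ ≤ 1 / τ := by gcongr
      _ ≤ 1 / t := one_div_le_one_div_of_le ht.1 hτ.1
  have hS_ge : ∀ t ∈ Set.Ioc (0:ℝ) 1, ∀ τ ∈ Set.Icc t 1, σ τ / τ ≤ S t := by
    intro t ht τ hτ
    exact le_csSup (hbdd t ht) ⟨τ, hτ, rfl⟩
  have hS1 : ∀ t ∈ Set.Ioc (0:ℝ) 1, 1 ≤ S t := by
    intro t ht
    have := hS_ge t ht 1 ⟨ht.2, le_refl 1⟩
    simpa [h1] using this
  have hSanti : ∀ t ∈ Set.Ioc (0:ℝ) 1, ∀ s ∈ Set.Ioc (0:ℝ) 1, t ≤ s → S s ≤ S t := by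
    intro t ht s hs hts
    exact csSup_le_csSup (hbdd t ht) (hne s hs)
      (Set.image_mono (Set.Icc_subset_Icc_left hts))
  have hσtS : ∀ t ∈ Set.Ioc (0:ℝ) 1, σt t = t * S t := fun t ht => hσt t ht
  -- σ ≤ σt on (0,1]
  have hle : ∀ t ∈ Set.Ioc (0:ℝ) 1, σ t ≤ σt t := by
    intro t ht
    rw [hσtS t ht]
    have h := hS_ge t ht t ⟨le_refl t, ht.2⟩
    have := mul_le_mul_of_nonneg_left h (le_of_lt ht.1)
    rwa [mul_div_cancel₀ _ (ne_of_gt ht.1)] at this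
  -- nonneg
  have hσtnn : ∀ t ∈ Set.Icc (0:ℝ) 1, 0 ≤ σt t := by
    intro t ht
    rcases eq_or_lt_of_le ht.1 with h | h
    · rw [← h, hσt0]
    · rw [hσtS t ⟨h, ht.2⟩]
      exact mul_nonneg (le_of_lt h) (le_trans zero_le_one (hS1 t ⟨h, ht.2⟩))
  -- mono
  have hσtmono : MonotoneOn σt (Set.Icc (0:ℝ) 1) := by
    intro a ha b hb hab
    rcases eq_or_lt_of_le ha.1 with h | h
    · rw [← h, hσt0]; exact hσtnn b hb
    · have ha' : a ∈ Set.Ioc (0:ℝ) 1 := ⟨h, ha.2⟩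
      have hb0 : 0 < b := lt_of_lt_of_le h hab
      have hb' : b ∈ Set.Ioc (0:ℝ) 1 := ⟨hb0, hb.2⟩
      rw [hσtS a ha', hσtS b hb']
      have hSb0 : 0 ≤ S b := le_trans zero_le_one (hS1 b hb')
      have key : S a ≤ b * S b / a := by
        apply csSup_le (hne a ha')
        rintro x ⟨τ, hτ, rfl⟩
        have hτ0 : 0 < τ := lt_of_lt_of_le h hτ.1
        rw [le_div_iff₀ h]
        rcases le_total τ b with hτb | hbτ
        · have h1' : σ τ / τ * a ≤ σ τ := by
            rw [div_mul_eq_mul_div, div_le_iff₀ hτ0]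
            exact mul_le_mul_of_nonneg_left hτ.1
              (hnn τ ⟨le_of_lt hτ0, hτ.2⟩)
          have h2' : σ τ ≤ σ b := hmono ⟨le_of_lt hτ0, hτ.2⟩ ⟨le_of_lt hb0, hb.2⟩ hτb
          have h3' : σ b ≤ b * S b := by
            have := hS_ge b hb' b ⟨le_refl b, hb.2⟩
            have := mul_le_mul_of_nonneg_left this (le_of_lt hb0)
            rwa [mul_div_cancel₀ _ (ne_of_gt hb0)] at this
          linarith
        · have h1' : σ τ / τ ≤ S b := hS_ge b hb' τ ⟨hbτ, hτ.2⟩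
          have h2' : σ τ / τ * a ≤ S b * b :=
            mul_le_mul h1' hab (le_of_lt h) hSb0
          linarith
      calc a * S a ≤ a * (b * S b / a) :=
            mul_le_mul_of_nonneg_left key (le_of_lt h)
        _ = b * S b := by field_simp
  -- map_one
  have hσt1 : σt 1 = 1 := by
    rw [hσtS 1 ⟨one_pos, le_refl 1⟩]
    have : Set.Icc (1:ℝ) 1 = {1} := Set.Icc_self 1
    rw [hSdef]
    simp [this, h1]
  -- slope antitone
  have hslope : AntitoneOn (fun t => σt t / t) (Set.Ioc (0:ℝ) 1) := by
    intro a ha b hb hab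
    show σt b / b ≤ σt a / a
    rw [hσtS a ha, hσtS b hb, mul_div_cancel_left₀ _ (ne_of_gt ha.1),
      mul_div_cancel_left₀ _ (ne_of_gt hb.1)]
    exact hSanti a ha b hb hab
  -- Dini integral
  set g : ℝ → ℝ := fun u => if u ≤ 1 then σ (max u 0) else 1 with hgdef
  have hgmono : Monotone g := by
    intro u v huv
    by_cases hu : u ≤ 1 <;> by_cases hv : v ≤ 1 <;> simp [hgdef, hu, hv]
    · exact hmono ⟨le_max_right _ _, max_le hu zero_le_one⟩
        ⟨le_max_right _ _, max_le hv zero_le_one⟩ (max_le_max huv (le_refl 0))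
    · exact hσle1 _ ⟨le_max_right _ _, max_le hu zero_le_one⟩
    · exact absurd (le_trans huv hv) hu
  have hgnn : ∀ u, 0 ≤ g u := by
    intro u
    by_cases hu : u ≤ 1 <;> simp [hgdef, hu]
    · exact hnn _ ⟨le_max_right _ _, max_le hu zero_le_one⟩
  have hg1 : ∀ u, g u ≤ 1 := by
    intro u
    by_cases hu : u ≤ 1 <;> simp [hgdef, hu]
    · exact hσle1 _ ⟨le_max_right _ _, max_le hu zero_le_one⟩
  have hgσ : ∀ u ∈ Set.Ioo (0:ℝ) 1, g u = σ u := by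
    intro u hu
    simp [hgdef, le_of_lt hu.2, max_eq_left (le_of_lt hu.1)]
  set φ : ℝ → ℝ≥0∞ := fun u => ENNReal.ofReal (g u / u ^ 2) with hφdef
  have hφmeas : Measurable φ :=
    ENNReal.measurable_ofReal.comp (hgmono.measurable.div (measurable_id.pow_const 2))
  -- key pointwise bound
  have hIkey : ∀ t ∈ Set.Ioo (0:ℝ) 1,
      ENNReal.ofReal (S t) ≤ 4 * ∫⁻ u in Set.Ioc t 2, φ u := by
    intro t ht
    set I := ∫⁻ u in Set.Ioc t 2, φ u with hI
    have hel : ∀ τ ∈ Set.Icc t 1, ENNReal.ofReal (σ τ / τ) ≤ 4 * I := by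
      intro τ hτ
      have hτ0 : 0 < τ := lt_of_lt_of_le ht.1 hτ.1
      have hστnn : 0 ≤ σ τ := hnn τ ⟨le_of_lt hτ0, hτ.2⟩
      have hsub : Set.Ioc τ (2*τ) ⊆ Set.Ioc t 2 := by
        intro u hu
        constructor
        · exact lt_of_le_of_lt hτ.1 hu.1
        · calc u ≤ 2*τ := hu.2
            _ ≤ 2*1 := by linarith [hτ.2]
            _ = 2 := by norm_num
      have hlb : ∀ u ∈ Set.Ioc τ (2*τ), ENNReal.ofReal (σ τ / (4 * τ^2)) ≤ φ u := by
        intro u hu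
        apply ENNReal.ofReal_le_ofReal
        have hu0 : 0 < u := lt_trans hτ0 hu.1
        have hgu : σ τ ≤ g u := by
          by_cases h' : u ≤ 1
          · have : σ τ ≤ σ (max u 0) := by
              apply hmono ⟨le_of_lt hτ0, hτ.2⟩
                ⟨le_max_right _ _, max_le h' zero_le_one⟩
              exact le_max_of_le_left (le_of_lt hu.1)
            simpa [hgdef, h'] using this
          · have : σ τ ≤ 1 := hσle1 τ ⟨le_of_lt hτ0, hτ.2⟩
            simpa [hgdef, h'] using this
        have hu2 : u^2 ≤ 4*τ^2 := by nlinarith [hu.2, hu.1]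
        calc σ τ / (4*τ^2) ≤ σ τ / u^2 := by
              apply div_le_div_of_nonneg_left hστnn (by positivity) hu2
          _ ≤ g u / u^2 := by gcongr
      have hvol : ENNReal.ofReal (σ τ / (4*τ^2)) * MeasureTheory.volume (Set.Ioc τ (2*τ)) ≤ I := by
        calc ENNReal.ofReal (σ τ / (4*τ^2)) * MeasureTheory.volume (Set.Ioc τ (2*τ))
            = ∫⁻ _ in Set.Ioc τ (2*τ), ENNReal.ofReal (σ τ / (4*τ^2)) :=
              (MeasureTheory.setLIntegral_const _ _).symm
          _ ≤ ∫⁻ u in Set.Ioc τ (2*τ), φ u :=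
              MeasureTheory.setLIntegral_mono' measurableSet_Ioc hlb
          _ ≤ I := MeasureTheory.lintegral_mono_set hsub
      have hvol2 : MeasureTheory.volume (Set.Ioc τ (2*τ)) = ENNReal.ofReal τ := by
        rw [Real.volume_Ioc, show 2*τ - τ = τ by ring]
      have harith : ENNReal.ofReal (σ τ / (4*τ^2)) * ENNReal.ofReal τ
          = ENNReal.ofReal (σ τ / (4*τ)) := by
        rw [← ENNReal.ofReal_mul (by positivity)]
        congr 1
        field_simp
      have h4 : ENNReal.ofReal (σ τ / τ) = 4 * ENNReal.ofReal (σ τ / (4*τ)) := by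
        have : σ τ / τ = 4 * (σ τ / (4*τ)) := by field_simp
        rw [this, ENNReal.ofReal_mul (by norm_num)]
        norm_num
      rw [h4]
      rw [hvol2, harith] at hvol
      exact mul_le_mul_right hvol 4
    by_cases hItop : 4 * I = ⊤
    · rw [hItop]; exact le_top
    · have hSle : S t ≤ (4*I).toReal := by
        apply csSup_le (hne t ⟨ht.1, le_of_lt ht.2⟩)
        rintro x ⟨τ, hτ, rfl⟩
        have hτ0 : 0 < τ := lt_of_lt_of_le ht.1 hτ.1
        have hx : 0 ≤ σ τ / τ := div_nonneg (hnn τ ⟨le_of_lt hτ0, hτ.2⟩) (le_of_lt hτ0)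
        have := hel τ hτ
        calc σ τ / τ = (ENNReal.ofReal (σ τ / τ)).toReal := (ENNReal.toReal_ofReal hx).symm
          _ ≤ (4*I).toReal := ENNReal.toReal_mono hItop this
      calc ENNReal.ofReal (S t) ≤ ENNReal.ofReal ((4*I).toReal) :=
            ENNReal.ofReal_le_ofReal hSle
        _ = 4*I := ENNReal.ofReal_toReal hItop
  -- Tonelli / swap
  have hswap : ∫⁻ t in Set.Ioo (0:ℝ) 1, ∫⁻ u in Set.Ioc t 2, φ u ≤
      ∫⁻ u in Set.Ioc (0:ℝ) 2, φ u * ENNReal.ofReal u := by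
    have hmeasF : Measurable (Function.uncurry
        (fun (t u : ℝ) => Set.indicator (Set.Ioi t) φ u)) := by
      have heq : Function.uncurry (fun (t u : ℝ) => Set.indicator (Set.Ioi t) φ u)
          = Set.indicator {p : ℝ × ℝ | p.1 < p.2} (fun p => φ p.2) := by
        ext ⟨t, u⟩
        by_cases h' : t < u <;>
          simp [Function.uncurry, Set.indicator_apply, Set.mem_Ioi, h']
      rw [heq]
      exact (hφmeas.comp measurable_snd).indicator
        (measurableSet_lt measurable_fst measurable_snd)
    have hre : ∀ t ∈ Set.Ioo (0:ℝ) 1, ∫⁻ u in Set.Ioc t 2, φ u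
        = ∫⁻ u in Set.Ioc (0:ℝ) 2, Set.indicator (Set.Ioi t) φ u := by
      intro t ht
      have hset : Set.Ioi t ∩ Set.Ioc (0:ℝ) 2 = Set.Ioc t 2 := by
        ext u
        simp only [Set.mem_inter_iff, Set.mem_Ioi, Set.mem_Ioc]
        constructor
        · rintro ⟨h1', h2', h3'⟩; exact ⟨h1', h3'⟩
        · intro h'; exact ⟨h'.1, lt_trans ht.1 h'.1, h'.2⟩
      rw [MeasureTheory.lintegral_indicator measurableSet_Ioi,
        MeasureTheory.Measure.restrict_restrict measurableSet_Ioi, hset]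
    calc ∫⁻ t in Set.Ioo (0:ℝ) 1, ∫⁻ u in Set.Ioc t 2, φ u
        = ∫⁻ t in Set.Ioo (0:ℝ) 1, ∫⁻ u in Set.Ioc (0:ℝ) 2,
            Set.indicator (Set.Ioi t) φ u :=
          MeasureTheory.setLIntegral_congr_fun measurableSet_Ioo hre
      _ = ∫⁻ u in Set.Ioc (0:ℝ) 2, ∫⁻ t in Set.Ioo (0:ℝ) 1,
            Set.indicator (Set.Ioi t) φ u :=
          MeasureTheory.lintegral_lintegral_swap hmeasF.aemeasurable
      _ ≤ ∫⁻ u in Set.Ioc (0:ℝ) 2, φ u * ENNReal.ofReal u := by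
          apply MeasureTheory.setLIntegral_mono' measurableSet_Ioc
          intro u hu
          have hrw : ∀ t : ℝ, Set.indicator (Set.Ioi t) φ u
              = Set.indicator (Set.Iio u) (fun _ => φ u) t := by
            intro t
            simp [Set.indicator_apply, Set.mem_Ioi, Set.mem_Iio]
          calc ∫⁻ t in Set.Ioo (0:ℝ) 1, Set.indicator (Set.Ioi t) φ u
              = ∫⁻ t in Set.Ioo (0:ℝ) 1, Set.indicator (Set.Iio u) (fun _ => φ u) t := by
                simp_rw [hrw]
            _ = φ u * MeasureTheory.volume (Set.Iio u ∩ Set.Ioo (0:ℝ) 1) := by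
                rw [MeasureTheory.lintegral_indicator measurableSet_Iio,
                  MeasureTheory.Measure.restrict_restrict measurableSet_Iio,
                  MeasureTheory.setLIntegral_const]
            _ ≤ φ u * ENNReal.ofReal u := by
                apply mul_le_mul_right
                calc MeasureTheory.volume (Set.Iio u ∩ Set.Ioo (0:ℝ) 1) ≤ MeasureTheory.volume (Set.Ioo 0 u) := by
                      apply MeasureTheory.measure_mono
                      intro x hx
                      exact ⟨hx.2.1, hx.1⟩
                  _ = ENNReal.ofReal u := by rw [Real.volume_Ioo]; congr 1; ring
  -- final integral finite
  have hfinal : ∫⁻ u in Set.Ioc (0:ℝ) 2, φ u * ENNReal.ofReal u < ⊤ := by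
    have heq : ∀ u ∈ Set.Ioc (0:ℝ) 2, φ u * ENNReal.ofReal u
        = ENNReal.ofReal (g u / u) := by
      intro u hu
      rw [hφdef]
      rw [← ENNReal.ofReal_mul (div_nonneg (hgnn u) (sq_nonneg u))]
      congr 1
      have hu0 : (u:ℝ) ≠ 0 := ne_of_gt hu.1
      field_simp
    rw [MeasureTheory.setLIntegral_congr_fun measurableSet_Ioc
      heq]
    have hsub : Set.Ioc (0:ℝ) 2 ⊆ Set.Ioo 0 1 ∪ Set.Icc 1 2 := by
      intro u hu
      rcases lt_or_ge u 1 with h' | h'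
      · exact Or.inl ⟨hu.1, h'⟩
      · exact Or.inr ⟨h', hu.2⟩
    calc ∫⁻ u in Set.Ioc (0:ℝ) 2, ENNReal.ofReal (g u / u)
        ≤ ∫⁻ u in Set.Ioo (0:ℝ) 1 ∪ Set.Icc 1 2, ENNReal.ofReal (g u / u) :=
          MeasureTheory.lintegral_mono_set hsub
      _ ≤ (∫⁻ u in Set.Ioo (0:ℝ) 1, ENNReal.ofReal (g u / u))
          + ∫⁻ u in Set.Icc (1:ℝ) 2, ENNReal.ofReal (g u / u) :=
          MeasureTheory.lintegral_union_le _ _ _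
      _ < ⊤ := by
          apply ENNReal.add_lt_top.2
          constructor
          · have : ∀ u ∈ Set.Ioo (0:ℝ) 1, ENNReal.ofReal (g u / u)
                = ENNReal.ofReal (σ u / u) := by
              intro u hu; rw [hgσ u hu]
            rw [MeasureTheory.setLIntegral_congr_fun measurableSet_Ioo
              this]
            exact hdini
          · calc ∫⁻ u in Set.Icc (1:ℝ) 2, ENNReal.ofReal (g u / u)
                ≤ ∫⁻ _ in Set.Icc (1:ℝ) 2, 1 := by
                  apply MeasureTheory.setLIntegral_mono' measurableSet_Icc
                  intro u hu
                  have hgu : g u / u ≤ 1 :=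
                    div_le_one_of_le₀ (le_trans (hg1 u) hu.1) (le_trans zero_le_one hu.1)
                  calc ENNReal.ofReal (g u / u) ≤ ENNReal.ofReal 1 :=
                        ENNReal.ofReal_le_ofReal hgu
                    _ = 1 := ENNReal.ofReal_one
              _ = MeasureTheory.volume (Set.Icc (1:ℝ) 2) := by
                  rw [MeasureTheory.setLIntegral_const, one_mul]
              _ < ⊤ := by rw [Real.volume_Icc]; exact ENNReal.ofReal_lt_top
  have hdini' : ∫⁻ t in Set.Ioo (0:ℝ) 1, ENNReal.ofReal (σt t / t) < ⊤ := by
    have hpt : ∀ t ∈ Set.Ioo (0:ℝ) 1, ENNReal.ofReal (σt t / t)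
        ≤ 4 * ∫⁻ u in Set.Ioc t 2, φ u := by
      intro t ht
      have : σt t / t = S t := by
        rw [hσtS t ⟨ht.1, le_of_lt ht.2⟩, mul_div_cancel_left₀ _ (ne_of_gt ht.1)]
      rw [this]
      exact hIkey t ht
    calc ∫⁻ t in Set.Ioo (0:ℝ) 1, ENNReal.ofReal (σt t / t)
        ≤ ∫⁻ t in Set.Ioo (0:ℝ) 1, 4 * ∫⁻ u in Set.Ioc t 2, φ u :=
          MeasureTheory.setLIntegral_mono' measurableSet_Ioo hpt
      _ = 4 * ∫⁻ t in Set.Ioo (0:ℝ) 1, ∫⁻ u in Set.Ioc t 2, φ u :=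
          MeasureTheory.lintegral_const_mul' _ _ (by norm_num)
      _ ≤ 4 * ∫⁻ u in Set.Ioc (0:ℝ) 2, φ u * ENNReal.ofReal u :=
          mul_le_mul_right hswap 4
      _ < ⊤ := ENNReal.mul_lt_top (by norm_num) hfinal
  refine ⟨⟨hσtnn, hσtmono, hσt0, hσt1, hslope, hdini'⟩, hle⟩
end
end

section
/- Let n ≥ 2, ν ∈ (0,1], γ = ν/√(n−1), ρ > 0 and k > 0, and define ψ(y) = k [ (1 − y_n/(γρ))² − |y'|²/ρ² ] for y = (y', y_n) ∈ ℝⁿ. Then there exists a constant N₁ > 0, depending only on n and ν, such that for every y ∈ Π_ρ = {y : |y_i| < ρ for i = 1,…,n−1, 0 < y_n < γρ}, every real symmetric n×n matrix A with ν I ≤ A ≤ ν^{-1} I, and every vector β ∈ ℝⁿ: − Σ_{i,j} A_{ij} ∂_i∂_j ψ(y) + β · ∇ψ(y) ≤ N₁ |β| k / ρ. In particular, − Σ_{i,j} A_{ij} ∂_i∂_j ψ(y) ≤ 0. -/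
/-!
Statement 17: the barrier computation for
`ψ(y) = k[(1 - yₙ/(γρ))² - |y'|²/ρ²]` in the box `Π_ρ`:
`Lψ ≤ N₁|β|k/ρ` and `-Σ Aᵢⱼ ∂ᵢ∂ⱼψ ≤ 0` for every uniformly elliptic `A`.
-/

noncomputable section
open Set Filter Topology

/-- The index of the last coordinate in `Fin n`. -/
def lastIdx (n : ℕ) (hn : 0 < n) : Fin n := ⟨n - 1, Nat.sub_lt hn one_pos⟩

/-- First partial derivative `Dᵢ u`. -/
def D1 (n : ℕ) (i : Fin n) (u : EuclideanSpace ℝ (Fin n) → ℝ)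
    (x : EuclideanSpace ℝ (Fin n)) : ℝ :=
  fderiv ℝ u x (EuclideanSpace.single i 1)

/-- Second partial derivative `Dᵢ Dⱼ u`. -/
def D2 (n : ℕ) (i j : Fin n) (u : EuclideanSpace ℝ (Fin n) → ℝ)
    (x : EuclideanSpace ℝ (Fin n)) : ℝ :=
  fderiv ℝ (fun y => fderiv ℝ u y (EuclideanSpace.single j 1)) x (EuclideanSpace.single i 1)

/-- The box `Π_ρ = {y : |yᵢ| < ρ (i = 1,…,n-1), 0 < yₙ < γρ}`. -/
def boxPi (n : ℕ) (hn : 0 < n) (γ ρ : ℝ) : Set (EuclideanSpace ℝ (Fin n)) :=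
  {y | (∀ i : Fin n, (i : ℕ) < n - 1 → |y i| < ρ) ∧
    0 < y (lastIdx n hn) ∧ y (lastIdx n hn) < γ * ρ}

/-- The barrier `ψ(y) = k[(1 - yₙ/(γρ))² - |y'|²/ρ²]`. -/
def psiBar (n : ℕ) (hn : 0 < n) (γ ρ k : ℝ) (y : EuclideanSpace ℝ (Fin n)) : ℝ :=
  k * ((1 - y (lastIdx n hn) / (γ * ρ)) ^ 2 -
    (∑ i ∈ Finset.univ.filter fun i : Fin n => (i : ℕ) < n - 1, (y i) ^ 2) / ρ ^ 2)

namespace BarrierAux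

lemma hco (n : ℕ) (y : EuclideanSpace ℝ (Fin n)) (i : Fin n) :
    HasFDerivAt (fun y : EuclideanSpace ℝ (Fin n) => y i)
      (EuclideanSpace.proj i : EuclideanSpace ℝ (Fin n) →L[ℝ] ℝ) y := by
  exact (EuclideanSpace.proj (𝕜 := ℝ) i).hasFDerivAt

lemma abs_coord_le_norm {n : ℕ} (β : EuclideanSpace ℝ (Fin n)) (i : Fin n) : |β i| ≤ ‖β‖ := by
  rw [EuclideanSpace.norm_eq]
  rw [show |β i| = Real.sqrt (‖β i‖ ^ 2) by
    rw [Real.sqrt_sq (norm_nonneg _)]; exact (Real.norm_eq_abs _).symm]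
  exact Real.sqrt_le_sqrt
    (Finset.single_le_sum (f := fun j => ‖β j‖ ^ 2) (fun j _ => sq_nonneg _) (Finset.mem_univ i))

lemma hasFDeriv_psiBar (n : ℕ) (h : 0 < n) (γ ρ k : ℝ) (y : EuclideanSpace ℝ (Fin n)) :
    HasFDerivAt (psiBar n h γ ρ k)
      (k • ((2 * (1 - y (lastIdx n h) / (γ * ρ)) ^ 1 * -(1 / (γ * ρ))) •
          (EuclideanSpace.proj (lastIdx n h) : EuclideanSpace ℝ (Fin n) →L[ℝ] ℝ) -
        (ρ ^ 2)⁻¹ • ∑ i ∈ Finset.univ.filter fun i : Fin n => (i : ℕ) < n - 1,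
          (2 * y i) • (EuclideanSpace.proj i : EuclideanSpace ℝ (Fin n) →L[ℝ] ℝ))) y := by
  have hg : HasDerivAt (fun t : ℝ => (1 - t / (γ * ρ)) ^ 2)
      (2 * (1 - y (lastIdx n h) / (γ * ρ)) ^ 1 * -(1 / (γ * ρ))) (y (lastIdx n h)) := by
    have := (((hasDerivAt_id (y (lastIdx n h))).div_const (γ * ρ)).const_sub 1).fun_pow 2
    simpa using this
  have hsq := hg.comp_hasFDerivAt y (hco n y (lastIdx n h))
  have hsum : HasFDerivAt (fun y : EuclideanSpace ℝ (Fin n) =>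
      ∑ i ∈ Finset.univ.filter fun i : Fin n => (i : ℕ) < n - 1, (y i) ^ 2)
      (∑ i ∈ Finset.univ.filter fun i : Fin n => (i : ℕ) < n - 1,
        (2 * y i) • (EuclideanSpace.proj i : EuclideanSpace ℝ (Fin n) →L[ℝ] ℝ)) y := by
    apply HasFDerivAt.fun_sum
    intro i _
    have hgi : HasDerivAt (fun t : ℝ => t ^ 2) (2 * y i) (y i) := by
      simpa using hasDerivAt_pow 2 (y i)
    exact hgi.comp_hasFDerivAt y (hco n y i)
  exact (hsq.sub (hsum.mul_const (ρ ^ 2)⁻¹)).const_mul k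

lemma lastIdx_not_lt (n : ℕ) (h : 0 < n) : ¬ ((lastIdx n h : ℕ) < n - 1) := by
  simp [lastIdx]

lemma fderiv_single_last (n : ℕ) (h : 0 < n) (γ ρ k : ℝ) (y : EuclideanSpace ℝ (Fin n)) :
    fderiv ℝ (psiBar n h γ ρ k) y (EuclideanSpace.single (lastIdx n h) 1) =
      k * (2 * -(γ * ρ)⁻¹) + (k * (2 * ((γ * ρ)⁻¹ * (γ * ρ)⁻¹))) * y (lastIdx n h) := by
  rw [(hasFDeriv_psiBar n h γ ρ k y).fderiv]
  have hnl := lastIdx_not_lt n h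
  simp only [pow_one, one_div, ContinuousLinearMap.coe_smul', ContinuousLinearMap.coe_sub',
    ContinuousLinearMap.coe_sum', Pi.smul_apply, Pi.sub_apply, PiLp.proj_apply, smul_eq_mul,
    Finset.sum_apply, EuclideanSpace.single_apply, mul_ite, mul_one, mul_zero,
    Finset.sum_ite_eq', Finset.mem_filter, Finset.mem_univ, true_and]
  rw [if_neg hnl]
  simp [div_eq_mul_inv, mul_inv]
  ring

lemma fderiv_single_lt (n : ℕ) (h : 0 < n) (γ ρ k : ℝ) (y : EuclideanSpace ℝ (Fin n))
    (j : Fin n) (hj : (j : ℕ) < n - 1) :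
    fderiv ℝ (psiBar n h γ ρ k) y (EuclideanSpace.single j 1) =
      -(2 * k * (ρ ^ 2)⁻¹) * y j := by
  rw [(hasFDeriv_psiBar n h γ ρ k y).fderiv]
  have hne : (lastIdx n h : Fin n) ≠ j := by
    intro he
    exact lastIdx_not_lt n h (he ▸ hj)
  simp only [pow_one, one_div, ContinuousLinearMap.coe_smul', ContinuousLinearMap.coe_sub',
    ContinuousLinearMap.coe_sum', Pi.smul_apply, Pi.sub_apply, PiLp.proj_apply, smul_eq_mul,
    Finset.sum_apply, EuclideanSpace.single_apply, mul_ite, mul_one, mul_zero,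
    Finset.sum_ite_eq', Finset.mem_filter, Finset.mem_univ, true_and]
  rw [if_neg hne, if_pos hj]
  ring

lemma D2_eq (n : ℕ) (h : 0 < n) (γ ρ k : ℝ) (y : EuclideanSpace ℝ (Fin n)) (i j : Fin n) :
    D2 n i j (psiBar n h γ ρ k) y =
      if i = j then
        (if j = lastIdx n h then k * (2 * ((γ * ρ)⁻¹ * (γ * ρ)⁻¹)) else -(2 * k * (ρ ^ 2)⁻¹))
      else 0 := by
  unfold D2
  by_cases hj : j = lastIdx n h
  · subst hj
    have hfun : (fun y : EuclideanSpace ℝ (Fin n) =>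
        fderiv ℝ (psiBar n h γ ρ k) y (EuclideanSpace.single (lastIdx n h) 1)) =
        fun y : EuclideanSpace ℝ (Fin n) =>
          k * (2 * -(γ * ρ)⁻¹) + (k * (2 * ((γ * ρ)⁻¹ * (γ * ρ)⁻¹))) * y (lastIdx n h) :=
      funext (fderiv_single_last n h γ ρ k)
    rw [hfun]
    have hd : HasFDerivAt (fun y : EuclideanSpace ℝ (Fin n) =>
        k * (2 * -(γ * ρ)⁻¹) + (k * (2 * ((γ * ρ)⁻¹ * (γ * ρ)⁻¹))) * y (lastIdx n h))
        ((k * (2 * ((γ * ρ)⁻¹ * (γ * ρ)⁻¹))) •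
          (EuclideanSpace.proj (lastIdx n h) : EuclideanSpace ℝ (Fin n) →L[ℝ] ℝ)) y :=
      ((hco n y (lastIdx n h)).const_mul _).const_add _
    rw [hd.fderiv]
    rcases eq_or_ne i (lastIdx n h) with hi | hi
    · subst hi; simp
    · simp [EuclideanSpace.single_apply, hi, Ne.symm hi]
  · have hjlt : (j : ℕ) < n - 1 := by
      have h1 := j.isLt
      have h2 : (j : ℕ) ≠ n - 1 := fun he => hj (by
        apply Fin.ext
        simpa [lastIdx] using he)
      omega
    have hfun : (fun y : EuclideanSpace ℝ (Fin n) =>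
        fderiv ℝ (psiBar n h γ ρ k) y (EuclideanSpace.single j 1)) =
        fun y : EuclideanSpace ℝ (Fin n) => -(2 * k * (ρ ^ 2)⁻¹) * y j :=
      funext fun y => fderiv_single_lt n h γ ρ k y j hjlt
    rw [hfun]
    have hd : HasFDerivAt (fun y : EuclideanSpace ℝ (Fin n) => -(2 * k * (ρ ^ 2)⁻¹) * y j)
        ((-(2 * k * (ρ ^ 2)⁻¹)) •
          (EuclideanSpace.proj j : EuclideanSpace ℝ (Fin n) →L[ℝ] ℝ)) y :=
      (hco n y j).const_mul _
    rw [hd.fderiv]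
    rcases eq_or_ne i j with hi | hi
    · subst hi; simp [Ne.symm hj, hj]
    · simp [EuclideanSpace.single_apply, hi, Ne.symm hi]

end BarrierAux

open BarrierAux in
theorem barrier_computation
    (n : ℕ) (hn : 2 ≤ n) (ν : ℝ) (hν : ν ∈ Set.Ioc (0 : ℝ) 1)
    (γ : ℝ) (hγ : γ = ν / Real.sqrt (n - 1)) :
    ∃ N₁ > (0 : ℝ), ∀ ρ > (0 : ℝ), ∀ k > (0 : ℝ),
      ∀ y ∈ boxPi n (by omega) γ ρ,
      ∀ A : Fin n → Fin n → ℝ, (∀ i j, A i j = A j i) →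
        (∀ ξ : EuclideanSpace ℝ (Fin n),
          ν * ‖ξ‖ ^ 2 ≤ ∑ i, ∑ j, A i j * ξ i * ξ j ∧
          ∑ i, ∑ j, A i j * ξ i * ξ j ≤ ν⁻¹ * ‖ξ‖ ^ 2) →
        ∀ β : EuclideanSpace ℝ (Fin n),
          ((-∑ i, ∑ j, A i j * D2 n i j (psiBar n (by omega) γ ρ k) y) +
              ∑ i, β i * D1 n i (psiBar n (by omega) γ ρ k) y
            ≤ N₁ * ‖β‖ * k / ρ) ∧
          (-∑ i, ∑ j, A i j * D2 n i j (psiBar n (by omega) γ ρ k) y) ≤ 0 := by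
  obtain ⟨hν0, hν1⟩ := hν
  have np : 0 < n := by omega
  have hn2 : (2 : ℝ) ≤ (n : ℝ) := by exact_mod_cast hn
  have hn1 : (1 : ℝ) ≤ (n : ℝ) - 1 := by linarith
  set s : ℝ := Real.sqrt ((n : ℝ) - 1) with hs
  have hs0 : 0 < s := Real.sqrt_pos.mpr (by linarith)
  have hss : s * s = (n : ℝ) - 1 := Real.mul_self_sqrt (by linarith)
  have hγ0 : 0 < γ := by rw [hγ]; exact div_pos hν0 hs0
  refine ⟨2 * s / ν + 2 * ((n : ℝ) - 1), by positivity, ?_⟩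
  intro ρ hρ k hk y hy A hAsymm hell β
  set L : Fin n := lastIdx n np with hL
  have hγρ : 0 < γ * ρ := mul_pos hγ0 hρ
  -- box facts
  have hyL0 : 0 < y L := hy.2.1
  have hyL1 : y L < γ * ρ := hy.2.2
  have hybd : ∀ i : Fin n, (i : ℕ) < n - 1 → |y i| < ρ := hy.1
  -- the filter set
  set S : Finset (Fin n) := Finset.univ.filter (fun i : Fin n => (i : ℕ) < n - 1) with hSdef
  have hLS : L ∉ S := by
    simp only [hSdef, Finset.mem_filter, Finset.mem_univ, true_and, hL, lastIdx]
    omega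
  have hcompl : Finset.univ.filter (fun i : Fin n => ¬ ((i : ℕ) < n - 1)) = {L} := by
    ext i
    have hi := i.isLt
    simp only [Finset.mem_filter, Finset.mem_univ, true_and, Finset.mem_singleton, hL, lastIdx,
      Fin.ext_iff]
    omega
  have hScard : S.card = n - 1 := by
    have hSc : S = Finset.univ \ {L} := by
      ext i
      have hi := i.isLt
      simp only [hSdef, Finset.mem_filter, Finset.mem_univ, true_and, Finset.mem_sdiff,
        Finset.mem_singleton, hL, lastIdx, Fin.ext_iff]
      omega
    rw [hSc, Finset.card_sdiff_of_subset (by simp)]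
    simp
  -- diagonal bounds
  have hdiag : ∀ i : Fin n, ν ≤ A i i ∧ A i i ≤ ν⁻¹ := by
    intro i
    have h := hell (EuclideanSpace.single i 1)
    have hnorm : ‖EuclideanSpace.single i (1 : ℝ)‖ = 1 := by
      rw [EuclideanSpace.norm_single]; norm_num
    have hqq : ∑ p, ∑ q, A p q * (EuclideanSpace.single i (1 : ℝ)) p *
        (EuclideanSpace.single i (1 : ℝ)) q = A i i := by
      simp [EuclideanSpace.single_apply, mul_ite, ite_mul, mul_zero, zero_mul, mul_one,
        Finset.sum_ite_eq']
    rw [hqq, hnorm] at h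
    simpa using h
  -- constants
  set C2 : ℝ := k * (2 * ((γ * ρ)⁻¹ * (γ * ρ)⁻¹)) with hC2
  set cS : ℝ := -(2 * k * (ρ ^ 2)⁻¹) with hcS
  have hC2pos : 0 < C2 := by
    rw [hC2]; positivity
  have hm : (0 : ℝ) < 2 * k * (ρ ^ 2)⁻¹ := by positivity
  -- second order sum
  have hinner : ∀ i : Fin n, ∑ j, A i j * D2 n i j (psiBar n np γ ρ k) y =
      A i i * (if i = L then C2 else cS) := by
    intro i
    simp only [D2_eq n np γ ρ k y, hL, hC2, hcS, mul_ite, mul_zero]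
    rw [Finset.sum_ite_eq]
    simp only [Finset.mem_univ, if_true]
  have hT2 : ∑ i, ∑ j, A i j * D2 n i j (psiBar n np γ ρ k) y =
      (∑ i ∈ S, A i i) * cS + A L L * C2 := by
    rw [Finset.sum_congr rfl fun i _ => hinner i]
    rw [← Finset.sum_filter_add_sum_filter_not Finset.univ (fun i : Fin n => (i : ℕ) < n - 1)]
    rw [hcompl, Finset.sum_singleton, if_pos rfl]
    have h1 : ∀ i ∈ S, A i i * (if i = L then C2 else cS) = A i i * cS := by
      intro i hi
      have : i ≠ L := fun he => hLS (he ▸ hi)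
      simp [this]
    rw [show (Finset.filter (fun i : Fin n => (i : ℕ) < n - 1) Finset.univ) = S from rfl]
    rw [Finset.sum_congr rfl h1, ← Finset.sum_mul]
  -- bounds for the second order part
  have hb1 : ∑ i ∈ S, A i i ≤ ((n : ℝ) - 1) * ν⁻¹ := by
    calc ∑ i ∈ S, A i i ≤ S.card • ν⁻¹ :=
          Finset.sum_le_card_nsmul S _ ν⁻¹ fun i _ => (hdiag i).2
      _ = ((n : ℝ) - 1) * ν⁻¹ := by
          rw [hScard, nsmul_eq_mul, Nat.cast_sub np]
          norm_num
  have hb2 : ν ≤ A L L := (hdiag L).1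
  have hkey : ((n : ℝ) - 1) * ν⁻¹ * (2 * k * (ρ ^ 2)⁻¹) = ν * C2 := by
    have hγs : γ * γ = ν ^ 2 / ((n : ℝ) - 1) := by
      rw [hγ, div_mul_div_comm, hss]; ring
    rw [hC2]
    have hν' : ν ≠ 0 := ne_of_gt hν0
    have hρ' : ρ ≠ 0 := ne_of_gt hρ
    have hγ' : γ ≠ 0 := ne_of_gt hγ0
    have hn1' : (n : ℝ) - 1 ≠ 0 := by linarith
    have hγs' : ((n : ℝ) - 1) * (γ * γ) = ν ^ 2 := by
      rw [hγs]; field_simp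
    field_simp
    linear_combination hγs'
  have hsec : (-∑ i, ∑ j, A i j * D2 n i j (psiBar n np γ ρ k) y) ≤ 0 := by
    rw [hT2]
    have h1 : (∑ i ∈ S, A i i) * (2 * k * (ρ ^ 2)⁻¹) ≤
        ((n : ℝ) - 1) * ν⁻¹ * (2 * k * (ρ ^ 2)⁻¹) :=
      mul_le_mul_of_nonneg_right hb1 hm.le
    have h2 : ν * C2 ≤ A L L * C2 := mul_le_mul_of_nonneg_right hb2 hC2pos.le
    have : (∑ i ∈ S, A i i) * cS = -((∑ i ∈ S, A i i) * (2 * k * (ρ ^ 2)⁻¹)) := by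
      rw [hcS]; ring
    rw [this]
    linarith
  -- first order part
  have hD1L : D1 n L (psiBar n np γ ρ k) y = -(2 * k * (γ * ρ)⁻¹) * (1 - y L / (γ * ρ)) := by
    have h := fderiv_single_last n np γ ρ k y
    have h2 : D1 n L (psiBar n np γ ρ k) y =
        k * (2 * -(γ * ρ)⁻¹) + (k * (2 * ((γ * ρ)⁻¹ * (γ * ρ)⁻¹))) * y L := h
    rw [h2, div_eq_mul_inv]
    ring
  have hD1lt : ∀ i : Fin n, (i : ℕ) < n - 1 →
      D1 n i (psiBar n np γ ρ k) y = -(2 * k * (ρ ^ 2)⁻¹) * y i := by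
    intro i hi
    exact fderiv_single_lt n np γ ρ k y i hi
  set b : Fin n → ℝ := fun i => if i = L then 2 * k * (γ * ρ)⁻¹ else 2 * k * (ρ ^ 2)⁻¹ * ρ
    with hb
  have hbd : ∀ i : Fin n, β i * D1 n i (psiBar n np γ ρ k) y ≤ ‖β‖ * b i := by
    intro i
    have habs : |D1 n i (psiBar n np γ ρ k) y| ≤ b i := by
      by_cases hi : i = L
      · subst hi
        rw [hD1L, hb]
        simp only [if_pos rfl]
        have ht0 : 0 ≤ 1 - y L / (γ * ρ) := by
          have : y L / (γ * ρ) < 1 := (div_lt_one hγρ).mpr hyL1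
          linarith
        have ht1 : 1 - y L / (γ * ρ) ≤ 1 := by
          have : 0 < y L / (γ * ρ) := div_pos hyL0 hγρ
          linarith
        rw [abs_mul, abs_neg, abs_of_nonneg (by positivity : (0:ℝ) ≤ 2 * k * (γ * ρ)⁻¹),
          abs_of_nonneg ht0]
        exact mul_le_of_le_one_right (by positivity) ht1
      · have hilt : (i : ℕ) < n - 1 := by
          have h1 := i.isLt
          have h2 : (i : ℕ) ≠ n - 1 := fun he => hi (by
            apply Fin.ext
            simpa [hL, lastIdx] using he)
          omega
        rw [hD1lt i hilt, hb]
        simp only [if_neg hi]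
        rw [abs_mul, abs_neg, abs_of_nonneg (by positivity : (0:ℝ) ≤ 2 * k * (ρ ^ 2)⁻¹)]
        exact mul_le_mul_of_nonneg_left (hybd i hilt).le (by positivity)
    calc β i * D1 n i (psiBar n np γ ρ k) y ≤ |β i * D1 n i (psiBar n np γ ρ k) y| :=
          le_abs_self _
      _ = |β i| * |D1 n i (psiBar n np γ ρ k) y| := abs_mul _ _
      _ ≤ ‖β‖ * b i := mul_le_mul (abs_coord_le_norm β i) habs (abs_nonneg _) (norm_nonneg _)
  have hbsum : ∑ i, b i = ((n : ℝ) - 1) * (2 * k * (ρ ^ 2)⁻¹ * ρ) + 2 * k * (γ * ρ)⁻¹ := by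
    rw [← Finset.sum_filter_add_sum_filter_not Finset.univ (fun i : Fin n => (i : ℕ) < n - 1)]
    rw [hcompl, Finset.sum_singleton]
    have h1 : ∀ i ∈ S, b i = 2 * k * (ρ ^ 2)⁻¹ * ρ := by
      intro i hi
      have : i ≠ L := fun he => hLS (he ▸ hi)
      simp [hb, this]
    rw [show (Finset.filter (fun i : Fin n => (i : ℕ) < n - 1) Finset.univ) = S from rfl]
    rw [Finset.sum_congr rfl h1, Finset.sum_const, hScard]
    have : b L = 2 * k * (γ * ρ)⁻¹ := by simp [hb]
    rw [this, nsmul_eq_mul, Nat.cast_sub np]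
    norm_num
  have hfirst : ∑ i, β i * D1 n i (psiBar n np γ ρ k) y ≤
      (2 * s / ν + 2 * ((n : ℝ) - 1)) * ‖β‖ * k / ρ := by
    calc ∑ i, β i * D1 n i (psiBar n np γ ρ k) y ≤ ∑ i, ‖β‖ * b i :=
          Finset.sum_le_sum fun i _ => hbd i
      _ = ‖β‖ * ∑ i, b i := by rw [Finset.mul_sum]
      _ = (2 * s / ν + 2 * ((n : ℝ) - 1)) * ‖β‖ * k / ρ := by
          rw [hbsum]
          have hγinv : γ⁻¹ = s / ν := by rw [hγ, inv_div]
          rw [mul_inv, hγinv]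
          have hν' : ν ≠ 0 := ne_of_gt hν0
          have hρ' : ρ ≠ 0 := ne_of_gt hρ
          field_simp
          ring
  exact ⟨by linarith, hsec⟩
end
end
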